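/- arXiv:2511.15841 — 6 statements merged into one kernel-verified Lean document; each statement's English description precedes it below -/
import Mathlib

section
/- Let X_1, …, X_n be independent real-valued random variables with E[X_i] = 0, |X_i| ≤ M almost surely, and E[|X_i|^{1+κ}] ≤ σ^{1+κ} for every i, where M, σ > 0 and κ ∈ [0,1]. Let S_n = ∑_{i=1}^n X_i. Then for every λ ≥ 0: E[exp(λ S_n)] ≤ exp( n·(σ/M)^{1+κ}·(e^{λM} − 1 − λM) ). -/
open MeasureTheory ProbabilityTheory

lemma exp_sub_quad (u v : ℝ) (huv : |u| ≤ v) :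
    Real.exp u - 1 - u ≤ (u / v) ^ 2 * (Real.exp v - 1 - v) := by
  have hv : 0 ≤ v := le_trans (abs_nonneg u) huv
  rcases eq_or_lt_of_le hv with hv0 | hv0
  · have hu : u = 0 := abs_eq_zero.mp (le_antisymm (hv0 ▸ huv) (abs_nonneg u))
    simp [hu, ← hv0]
  have key : ∀ w : ℝ, Real.exp w - 1 - w = ∑' n : ℕ, w ^ (n + 2) / ((n + 2).factorial : ℝ) := by
    intro w
    have hs : Summable (fun n : ℕ => w ^ n / (n.factorial : ℝ)) := Real.summable_pow_div_factorial w
    have := (hs.sum_add_tsum_nat_add 2).symm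
    rw [Real.exp_eq_exp_ℝ, NormedSpace.exp_eq_tsum_div]
    simp only []
    rw [this]
    simp [Finset.sum_range_succ]
    ring
  rw [key, key]
  rw [← tsum_mul_left]
  have hsu : Summable (fun n : ℕ => u ^ (n + 2) / ((n + 2).factorial : ℝ)) :=
    (summable_nat_add_iff 2).mpr (Real.summable_pow_div_factorial u)
  have hsv : Summable (fun n : ℕ => (u / v) ^ 2 * (v ^ (n + 2) / ((n + 2).factorial : ℝ))) :=
    ((summable_nat_add_iff 2).mpr (Real.summable_pow_div_factorial v)).mul_left _
  refine Summable.tsum_le_tsum (fun n => ?_) hsu hsv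
  have h1 : u ^ (n + 2) ≤ u ^ 2 * v ^ n := by
    calc u ^ (n + 2) ≤ |u ^ (n + 2)| := le_abs_self _
    _ = |u| ^ 2 * |u| ^ n := by rw [abs_pow]; ring
    _ ≤ |u| ^ 2 * v ^ n := by
        gcongr
    _ = u ^ 2 * v ^ n := by rw [sq_abs]
  have h2 : (u / v) ^ 2 * (v ^ (n + 2) / ((n + 2).factorial : ℝ)) =
      u ^ 2 * v ^ n / ((n + 2).factorial : ℝ) := by
    field_simp
    ring
  rw [h2]
  exact div_le_div_of_nonneg_right h1 (by positivity)

lemma pointwise_exp_bound (M κ l x : ℝ) (hM : 0 < M) (hκ : κ ∈ Set.Icc (0 : ℝ) 1)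
    (hl : 0 ≤ l) (hx : |x| ≤ M) :
    Real.exp (l * x) ≤ 1 + l * x + |x| ^ (1 + κ) / M ^ (1 + κ) * (Real.exp (l * M) - 1 - l * M) := by
  have hC : 0 ≤ Real.exp (l * M) - 1 - l * M := by
    have := Real.add_one_le_exp (l * M); linarith
  have hquad : Real.exp (l * x) - 1 - l * x ≤
      (x / M) ^ 2 * (Real.exp (l * M) - 1 - l * M) := by
    rcases eq_or_lt_of_le hl with hl0 | hl0
    · simp [← hl0]
    have huv : |l * x| ≤ l * M := by
      rw [abs_mul, abs_of_pos hl0]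
      exact mul_le_mul_of_nonneg_left hx hl
    have := exp_sub_quad (l * x) (l * M) huv
    have hx2 : (l * x / (l * M)) ^ 2 = (x / M) ^ 2 := by
      rw [mul_div_mul_left _ _ (ne_of_gt hl0)]
    rwa [hx2] at this
  have hpow : (x / M) ^ 2 ≤ |x| ^ (1 + κ) / M ^ (1 + κ) := by
    have ht0 : 0 ≤ |x| / M := div_nonneg (abs_nonneg x) hM.le
    have ht1 : |x| / M ≤ 1 := (div_le_one hM).mpr hx
    have h1 : (x / M) ^ 2 = (|x| / M) ^ ((2 : ℕ) : ℝ) := by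
      rw [Real.rpow_natCast, div_pow, div_pow, sq_abs]
    have h2 : (|x| / M) ^ ((2 : ℕ) : ℝ) ≤ (|x| / M) ^ (1 + κ) :=
      Real.rpow_le_rpow_of_exponent_ge' ht0 ht1 (by linarith [hκ.1]) (by push_cast; linarith [hκ.2])
    have h3 : (|x| / M) ^ (1 + κ) = |x| ^ (1 + κ) / M ^ (1 + κ) :=
      Real.div_rpow (abs_nonneg x) hM.le _
    rw [h1, ← h3]
    exact h2
  nlinarith [mul_le_mul_of_nonneg_right hpow hC]

/-- Bernstein-type MGF bound: if `X_1, …, X_n` are independent centered random variables with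
`|X_i| ≤ M` a.s. and `E|X_i|^{1+κ} ≤ σ^{1+κ}` for `κ ∈ [0,1]`, then for every `λ ≥ 0`,
`E[exp(λ S_n)] ≤ exp(n (σ/M)^{1+κ} (e^{λM} − 1 − λM))` where `S_n = ∑ X_i`. -/
theorem mgf_bound_of_independent_centered
    {Ω : Type*} [MeasurableSpace Ω] (μ : Measure Ω) [IsProbabilityMeasure μ]
    (n : ℕ) (X : Fin n → Ω → ℝ)
    (hXmeas : ∀ i, Measurable (X i))
    (hXindep : iIndepFun X μ)
    (M σ κ : ℝ) (hM : 0 < M) (hσ : 0 < σ) (hκ : κ ∈ Set.Icc (0 : ℝ) 1)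
    (hmean : ∀ i, ∫ ω, X i ω ∂μ = 0)
    (hbdd : ∀ i, ∀ᵐ ω ∂μ, |X i ω| ≤ M)
    (hmom : ∀ i, ∫ ω, |X i ω| ^ (1 + κ) ∂μ ≤ σ ^ (1 + κ))
    (l : ℝ) (hl : 0 ≤ l) :
    (∫ ω, Real.exp (l * ∑ i, X i ω) ∂μ) ≤
      Real.exp ((n : ℝ) * (σ / M) ^ (1 + κ) * (Real.exp (l * M) - 1 - l * M)) := by
  set C : ℝ := Real.exp (l * M) - 1 - l * M with hCdef
  have hC : 0 ≤ C := by have := Real.add_one_le_exp (l * M); simp [hCdef]; linarith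
  have hMp : (0 : ℝ) < M ^ (1 + κ) := Real.rpow_pos_of_pos hM _
  set c : ℝ := (σ / M) ^ (1 + κ) * C with hcdef
  -- per-variable bound
  have key : ∀ i, mgf (X i) μ l ≤ Real.exp c := by
    intro i
    have hint1 : Integrable (fun ω => Real.exp (l * X i ω)) μ := by
      refine Integrable.mono' (integrable_const (Real.exp (l * M)))
        (((hXmeas i).const_mul l).exp.aestronglyMeasurable) ?_
      filter_upwards [hbdd i] with ω h
      rw [Real.norm_eq_abs, abs_of_pos (Real.exp_pos _)]
      exact Real.exp_le_exp.mpr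
        (mul_le_mul_of_nonneg_left ((le_abs_self _).trans h) hl)
    have hint2 : Integrable (X i) μ := by
      refine Integrable.mono' (integrable_const M) (hXmeas i).aestronglyMeasurable ?_
      filter_upwards [hbdd i] with ω h
      rwa [Real.norm_eq_abs]
    have hint3 : Integrable (fun ω => |X i ω| ^ (1 + κ)) μ := by
      refine Integrable.mono' (integrable_const (M ^ (1 + κ)))
        (((Real.continuous_rpow_const (by linarith [hκ.1])).measurable.comp
          (hXmeas i).abs).aestronglyMeasurable) ?_
      filter_upwards [hbdd i] with ω h
      rw [Real.norm_eq_abs, abs_of_nonneg (Real.rpow_nonneg (abs_nonneg _) _)]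
      exact Real.rpow_le_rpow (abs_nonneg _) h (by linarith [hκ.1])
    have hintR : Integrable
        (fun ω => 1 + l * X i ω + |X i ω| ^ (1 + κ) / M ^ (1 + κ) * C) μ := by
      exact ((integrable_const 1).add (hint2.const_mul l)).add
        ((hint3.div_const _).mul_const C)
    have hmono : mgf (X i) μ l ≤
        ∫ ω, (1 + l * X i ω + |X i ω| ^ (1 + κ) / M ^ (1 + κ) * C) ∂μ := by
      refine integral_mono_ae hint1 hintR ?_
      filter_upwards [hbdd i] with ω h
      exact pointwise_exp_bound M κ l (X i ω) hM hκ hl h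
    have hcomp : ∫ ω, (1 + l * X i ω + |X i ω| ^ (1 + κ) / M ^ (1 + κ) * C) ∂μ =
        1 + (∫ ω, |X i ω| ^ (1 + κ) ∂μ) / M ^ (1 + κ) * C := by
      have h4 : ∫ ω, (1 + l * X i ω + |X i ω| ^ (1 + κ) / M ^ (1 + κ) * C) ∂μ =
          (∫ ω, (1 + l * X i ω) ∂μ) + ∫ ω, |X i ω| ^ (1 + κ) / M ^ (1 + κ) * C ∂μ :=
        integral_add ((integrable_const 1).add (hint2.const_mul l))
          ((hint3.div_const _).mul_const C)
      have h5 : ∫ ω, (1 + l * X i ω) ∂μ = 1 + l * ∫ ω, X i ω ∂μ := by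
        rw [integral_add (integrable_const 1) (hint2.const_mul l), integral_const,
          integral_const_mul]
        simp
      have h6 : ∫ ω, |X i ω| ^ (1 + κ) / M ^ (1 + κ) * C ∂μ =
          (∫ ω, |X i ω| ^ (1 + κ) ∂μ) / M ^ (1 + κ) * C := by
        rw [integral_mul_const, integral_div]
      rw [h4, h5, h6, hmean i]
      ring
    have hfin : 1 + (∫ ω, |X i ω| ^ (1 + κ) ∂μ) / M ^ (1 + κ) * C ≤ 1 + c := by
      have hdr : (σ / M) ^ (1 + κ) = σ ^ (1 + κ) / M ^ (1 + κ) :=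
        Real.div_rpow hσ.le hM.le _
      rw [hcdef, hdr]
      gcongr
      exact hmom i
    calc mgf (X i) μ l ≤ 1 + (∫ ω, |X i ω| ^ (1 + κ) ∂μ) / M ^ (1 + κ) * C :=
          hcomp ▸ hmono
    _ ≤ 1 + c := hfin
    _ ≤ Real.exp c := by have := Real.add_one_le_exp c; linarith
  -- combine via independence
  have hsum : (∫ ω, Real.exp (l * ∑ i, X i ω) ∂μ) = mgf (∑ i, X i) μ l := by
    unfold mgf
    congr 1
    ext ω
    simp [Finset.sum_apply]
  rw [hsum, hXindep.mgf_sum hXmeas Finset.univ]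
  calc (∏ i, mgf (X i) μ l) ≤ ∏ _i : Fin n, Real.exp c :=
        Finset.prod_le_prod (fun i _ => mgf_nonneg) (fun i _ => key i)
  _ = Real.exp c ^ n := by simp
  _ = Real.exp ((n : ℝ) * c) := by rw [← Real.exp_nat_mul]
  _ = Real.exp ((n : ℝ) * (σ / M) ^ (1 + κ) * C) := by rw [hcdef, mul_assoc]
end

section
/- Let X_1, …, X_n be i.i.d. with law P, let ε_1, …, ε_n be i.i.d. Rademacher random variables independent of X_1, …, X_n, and let κ ∈ [0,1]. Let f_1, …, f_N be measurable functions with max_{r≤N} ‖f_r‖_{L^∞} ≤ M and max_{r≤N} E[|f_r(X_1)|^{1+κ}] ≤ σ^{1+κ} for some M, σ > 0. Then E[ max_{1≤r≤N} |P_n^ε f_r| ] ≤ (M^{(1−κ)/2}/√n)·√( 2σ^{1+κ}·log(2N) ) + (M/(3n))·log(2N). -/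
set_option maxHeartbeats 1000000

open MeasureTheory ProbabilityTheory Nat

lemma two_mul_three_pow_le_factorial (k : ℕ) : 2 * 3 ^ k ≤ (k + 2)! := by
  induction k with
  | zero => simp [Nat.factorial]
  | succ k ih =>
    have : (k + 3)! = (k + 3) * (k + 2)! := rfl
    rw [this, pow_succ]
    calc 2 * (3 ^ k * 3) = 3 * (2 * 3 ^ k) := by ring
    _ ≤ (k + 3) * (k + 2)! := by
        exact Nat.mul_le_mul (by omega) ih

lemma exp_le_quad {x b : ℝ} (hb : b < 3) (hx : |x| ≤ b) :
    Real.exp x ≤ 1 + x + x ^ 2 / (2 * (1 - b / 3)) := by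
  have hb0 : 0 ≤ b := le_trans (abs_nonneg x) hx
  have hb3 : 0 < 1 - b / 3 := by linarith
  have hsum : Summable fun n : ℕ => x ^ n / (n ! : ℝ) :=
    NormedSpace.expSeries_div_summable x
  have hexp : Real.exp x = ∑' n : ℕ, x ^ n / (n ! : ℝ) := by
    rw [Real.exp_eq_exp_ℝ, NormedSpace.exp_eq_tsum_div]
  have hgeom : Summable fun k : ℕ => x ^ 2 / 2 * (b / 3) ^ k :=
    Summable.mul_left _ (summable_geometric_of_lt_one (by positivity) (by linarith))
  have htail : ∀ k : ℕ, x ^ (k + 2) / (((k + 2)! : ℕ) : ℝ) ≤ x ^ 2 / 2 * (b / 3) ^ k := by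
    intro k
    have hfac : (2 * 3 ^ k : ℝ) ≤ (((k + 2)! : ℕ) : ℝ) := by
      exact_mod_cast two_mul_three_pow_le_factorial k
    have hfacpos : (0 : ℝ) < (((k + 2)! : ℕ) : ℝ) := by
      exact_mod_cast Nat.factorial_pos _
    have h1 : x ^ (k + 2) ≤ x ^ 2 * b ^ k := by
      calc x ^ (k + 2) ≤ |x ^ (k + 2)| := le_abs_self _
      _ = |x| ^ 2 * |x| ^ k := by rw [abs_pow]; ring
      _ ≤ |x| ^ 2 * b ^ k := by
          exact mul_le_mul_of_nonneg_left (pow_le_pow_left₀ (abs_nonneg _) hx k) (by positivity)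
      _ = x ^ 2 * b ^ k := by rw [sq_abs]
    calc x ^ (k + 2) / (((k + 2)! : ℕ) : ℝ) ≤ (x ^ 2 * b ^ k) / (2 * 3 ^ k) := by
          apply div_le_div₀ (by positivity) h1 (by positivity) hfac
    _ = x ^ 2 / 2 * (b / 3) ^ k := by
        rw [div_pow]; ring
  have hsplit := Summable.sum_add_tsum_nat_add (f := fun n : ℕ => x ^ n / (n ! : ℝ)) 2 hsum
  have htsum : (∑' k : ℕ, x ^ (k + 2) / (((k + 2)! : ℕ) : ℝ)) ≤ x ^ 2 / (2 * (1 - b / 3)) := by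
    calc (∑' k : ℕ, x ^ (k + 2) / (((k + 2)! : ℕ) : ℝ))
        ≤ ∑' k : ℕ, x ^ 2 / 2 * (b / 3) ^ k :=
          Summable.tsum_le_tsum htail ((summable_nat_add_iff 2).mpr hsum) hgeom
      _ = x ^ 2 / 2 * (1 - b / 3)⁻¹ := by
          rw [tsum_mul_left, tsum_geometric_of_lt_one (by positivity) (by linarith)]
      _ = x ^ 2 / (2 * (1 - b / 3)) := by field_simp
  have hfirst : (∑ i ∈ Finset.range 2, x ^ i / (i ! : ℝ)) = 1 + x := by
    simp [Finset.sum_range_succ, Nat.factorial]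
  rw [hexp, ← hsplit, hfirst]
  linarith

lemma mgf_le_bernstein {Ω : Type*} [MeasurableSpace Ω] (μ : Measure Ω)
    [IsProbabilityMeasure μ] (Y : Ω → ℝ) (hY : AEStronglyMeasurable Y μ)
    (M v t : ℝ) (hM0 : 0 ≤ M) (hv0 : 0 ≤ v)
    (hbdd : ∀ᵐ ω ∂μ, |Y ω| ≤ M) (hmean : ∫ ω, Y ω ∂μ = 0)
    (hvar : ∫ ω, Y ω ^ 2 ∂μ ≤ v) (ht : 0 ≤ t) (htM : t * M < 3) :
    mgf Y μ t ≤ Real.exp (v * t ^ 2 / (2 * (1 - t * M / 3))) := by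
  set D : ℝ := 2 * (1 - t * M / 3) with hD
  have hD0 : 0 < D := by rw [hD]; nlinarith
  have hYint : Integrable Y μ := by
    refine (integrable_const M).mono' hY ?_
    filter_upwards [hbdd] with ω h using by simpa [Real.norm_eq_abs] using h
  have hY2int : Integrable (fun ω => Y ω ^ 2) μ := by
    refine (integrable_const (M ^ 2)).mono' (hY.mul hY |>.congr ?_) ?_
    · filter_upwards with ω using by simp [pow_two]
    · filter_upwards [hbdd] with ω h
      rw [Real.norm_eq_abs, abs_pow]
      exact pow_le_pow_left₀ (abs_nonneg _) h 2
  have hptwise : ∀ᵐ ω ∂μ, Real.exp (t * Y ω) ≤ 1 + t * Y ω + (t * Y ω) ^ 2 / D := by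
    filter_upwards [hbdd] with ω h
    refine exp_le_quad htM ?_
    rw [abs_mul, abs_of_nonneg ht]
    exact mul_le_mul_of_nonneg_left h ht
  have hexpint : Integrable (fun ω => Real.exp (t * Y ω)) μ := by
    refine (integrable_const (Real.exp (t * M))).mono'
      (Real.continuous_exp.comp_aestronglyMeasurable (hY.const_mul t)) ?_
    filter_upwards [hbdd] with ω h
    rw [Real.norm_eq_abs, Real.abs_exp, Real.exp_le_exp]
    calc t * Y ω ≤ |t * Y ω| := le_abs_self _
    _ = t * |Y ω| := by rw [abs_mul, abs_of_nonneg ht]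
    _ ≤ t * M := mul_le_mul_of_nonneg_left h ht
  have hfun2 : (fun ω => (t * Y ω) ^ 2 / D) = fun ω => (t ^ 2 / D) * Y ω ^ 2 := by
    funext ω; field_simp
  have hint1 : Integrable (fun ω => 1 + t * Y ω) μ :=
    (integrable_const 1).add (hYint.const_mul t)
  have hint2 : Integrable (fun ω => (t * Y ω) ^ 2 / D) μ := by
    rw [hfun2]; exact hY2int.const_mul _
  have hrhsint : Integrable (fun ω => 1 + t * Y ω + (t * Y ω) ^ 2 / D) μ := hint1.add hint2
  have hmgf : mgf Y μ t ≤ 1 + t ^ 2 / D * v := by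
    calc mgf Y μ t = ∫ ω, Real.exp (t * Y ω) ∂μ := rfl
    _ ≤ ∫ ω, (1 + t * Y ω + (t * Y ω) ^ 2 / D) ∂μ :=
        integral_mono_ae hexpint hrhsint hptwise
    _ = 1 + t * ∫ ω, Y ω ∂μ + t ^ 2 / D * ∫ ω, Y ω ^ 2 ∂μ := by
        rw [integral_add hint1 hint2, integral_add (integrable_const 1) (hYint.const_mul t),
          integral_const, integral_const_mul]
        simp only [hfun2]
        rw [integral_const_mul]
        simp [measure_univ]
    _ ≤ 1 + t ^ 2 / D * v := by
        rw [hmean]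
        have : t ^ 2 / D * ∫ ω, Y ω ^ 2 ∂μ ≤ t ^ 2 / D * v :=
          mul_le_mul_of_nonneg_left hvar (by positivity)
        linarith
  calc mgf Y μ t ≤ 1 + t ^ 2 / D * v := hmgf
  _ ≤ Real.exp (t ^ 2 / D * v) := by
      have := Real.add_one_le_exp (t ^ 2 / D * v); linarith
  _ = Real.exp (v * t ^ 2 / (2 * (1 - t * M / 3))) := by rw [hD]; ring_nf

lemma mgf_sum_le_bernstein
    {𝒳 Ω : Type*} [MeasurableSpace 𝒳] [MeasurableSpace Ω]
    (μ : Measure Ω) [IsProbabilityMeasure μ]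
    (P : Measure 𝒳) [IsProbabilityMeasure P]
    (n : ℕ)
    (X : Fin n → Ω → 𝒳) (ε : Fin n → Ω → ℝ)
    (hXmeas : ∀ i, Measurable (X i)) (hεmeas : ∀ i, Measurable (ε i))
    (hXlaw : ∀ i, μ.map (X i) = P)
    (hεval : ∀ i, ∀ᵐ ω ∂μ, ε i ω = 1 ∨ ε i ω = -1)
    (hεsym : ∀ i, μ {ω | ε i ω = 1} = 1 / 2)
    (hpairsindep : iIndepFun
      (fun i ω => (X i ω, ε i ω)) μ)
    (hXεindep : ∀ i, IndepFun (X i) (ε i) μ)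
    (κ M σ : ℝ) (hκ : κ ∈ Set.Icc (0 : ℝ) 1) (hM : 0 < M) (hσ : 0 < σ)
    (g : 𝒳 → ℝ) (hg : Measurable g) (hgb : ∀ x, |g x| ≤ M)
    (hgm : ∫ x, |g x| ^ (1 + κ) ∂P ≤ σ ^ (1 + κ))
    (t : ℝ) (ht : 0 ≤ t) (htM : t * M < 3) :
    ∫ ω, Real.exp (t * ∑ i, ε i ω * g (X i ω)) ∂μ ≤
      Real.exp (n * (M ^ (1 - κ) * σ ^ (1 + κ)) * t ^ 2 / (2 * (1 - t * M / 3))) := by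
  obtain ⟨hκ0, hκ1⟩ := hκ
  set v : ℝ := M ^ (1 - κ) * σ ^ (1 + κ) with hv
  have hv0 : 0 < v := by
    apply mul_pos <;> exact Real.rpow_pos_of_pos (by assumption) _
  set Y : Fin n → Ω → ℝ := fun i ω => ε i ω * g (X i ω) with hY
  have hYmeas : ∀ i, Measurable (Y i) := fun i => (hεmeas i).mul (hg.comp (hXmeas i))
  -- independence of the Y i
  have hYindep : iIndepFun Y μ := by
    have hφ : Measurable (fun p : 𝒳 × ℝ => p.2 * g p.1) :=
      measurable_snd.mul (hg.comp measurable_fst)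
    exact hpairsindep.comp (fun _ => fun p : 𝒳 × ℝ => p.2 * g p.1) (fun _ => hφ)
  -- mgf of sum = product of mgfs
  have hsum : mgf (∑ i, Y i) μ t = ∏ i, mgf (Y i) μ t :=
    hYindep.mgf_sum hYmeas Finset.univ
  -- per-coordinate bound
  have hper : ∀ i, mgf (Y i) μ t ≤ Real.exp (v * t ^ 2 / (2 * (1 - t * M / 3))) := by
    intro i
    -- mean zero
    have hgXint : Integrable (fun ω => g (X i ω)) μ := by
      refine (integrable_const M).mono' (hg.comp (hXmeas i)).aestronglyMeasurable ?_
      filter_upwards with ω using by simpa [Real.norm_eq_abs] using hgb (X i ω)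
    have hεint : Integrable (ε i) μ := by
      refine (integrable_const 1).mono' (hεmeas i).aestronglyMeasurable ?_
      filter_upwards [hεval i] with ω h
      rcases h with h | h <;> simp [Real.norm_eq_abs, h]
    have hεmean : ∫ ω, ε i ω ∂μ = 0 := by
      set A : Set Ω := {ω | ε i ω = 1} with hA
      set B : Set Ω := {ω | ε i ω = -1} with hB
      have hAm : MeasurableSet A := (hεmeas i) (measurableSet_singleton 1)
      have hBm : MeasurableSet B := (hεmeas i) (measurableSet_singleton (-1))
      have hABdisj : Disjoint A B := by
        rw [Set.disjoint_left]
        intro ω hωA hωB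
        simp only [hA, hB, Set.mem_setOf_eq] at hωA hωB
        rw [hωA] at hωB; norm_num at hωB
      have hcompl : μ (A ∪ B)ᶜ = 0 := by
        rw [measure_eq_zero_iff_ae_notMem]
        filter_upwards [hεval i] with ω h
        simp only [Set.mem_compl_iff, Set.mem_union, not_not, hA, hB, Set.mem_setOf_eq]
        exact h
      have hABfull : μ (A ∪ B) = 1 := by
        have h := measure_add_measure_compl (μ := μ) (hAm.union hBm)
        rw [hcompl, add_zero] at h
        simpa using h
      have hBmeas : μ B = 1 / 2 := by
        have hunion : μ A + μ B = 1 := by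
          rw [← measure_union hABdisj hBm, hABfull]
        rw [hεsym i] at hunion
        have h2 : (1 : ENNReal) / 2 + 1 / 2 = 1 := ENNReal.add_halves 1
        have hunion' : (1 : ENNReal) / 2 + μ B = 1 / 2 + 1 / 2 := hunion.trans h2.symm
        exact (ENNReal.add_right_inj
          (by simp : (1 : ENNReal) / 2 ≠ ⊤)).mp hunion'
      have heq : ε i =ᵐ[μ] fun ω => A.indicator (fun _ => (1 : ℝ)) ω
          + B.indicator (fun _ => (-1 : ℝ)) ω := by
        filter_upwards [hεval i] with ω h
        rcases h with h | h
        · have hωA : ω ∈ A := h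
          have hωB : ω ∉ B := by
            simp only [hB, Set.mem_setOf_eq]; rw [h]; norm_num
          simp [Set.indicator_of_mem hωA, Set.indicator_of_notMem hωB, h]
        · have hωB : ω ∈ B := h
          have hωA : ω ∉ A := by
            simp only [hA, Set.mem_setOf_eq]; rw [h]; norm_num
          simp [Set.indicator_of_mem hωB, Set.indicator_of_notMem hωA, h]
      rw [integral_congr_ae heq, integral_add, integral_indicator_const,
        integral_indicator_const]
      · rw [measureReal_def, measureReal_def, hBmeas, hA, hεsym i]; norm_num
      · exact hBm
      · exact hAm
      · exact (integrable_const (1 : ℝ)).indicator hAm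
      · exact (integrable_const (-1 : ℝ)).indicator hBm
    have hmean : ∫ ω, Y i ω ∂μ = 0 := by
      have hindep : IndepFun (ε i) (fun ω => g (X i ω)) μ :=
        ((hXεindep i).comp hg measurable_id).symm
      have := hindep.integral_mul_eq_mul_integral hεint.aestronglyMeasurable hgXint.aestronglyMeasurable
      have heqf : ∫ ω, Y i ω ∂μ = integral μ (ε i * fun ω => g (X i ω)) := rfl
      rw [heqf, this, hεmean, zero_mul]
    -- variance
    have hvar : ∫ ω, Y i ω ^ 2 ∂μ ≤ v := by
      have heq2 : (fun ω => Y i ω ^ 2) =ᵐ[μ] fun ω => g (X i ω) ^ 2 := by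
        filter_upwards [hεval i] with ω h
        rcases h with h | h <;> simp [hY, mul_pow, h]
      rw [integral_congr_ae heq2]
      have hmap : ∫ ω, g (X i ω) ^ 2 ∂μ = ∫ x, g x ^ 2 ∂P := by
        rw [← hXlaw i, integral_map (hXmeas i).aemeasurable
          (hg.pow_const 2).aestronglyMeasurable]
      rw [hmap]
      have hpt : ∀ x, g x ^ 2 ≤ M ^ (1 - κ) * |g x| ^ (1 + κ) := by
        intro x
        rcases eq_or_lt_of_le (abs_nonneg (g x)) with h0 | h0
        · have hg0 : g x = 0 := abs_eq_zero.mp h0.symm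
          rw [hg0, abs_zero, Real.zero_rpow (by linarith : (1:ℝ) + κ ≠ 0)]
          simp
        · calc g x ^ 2 = |g x| ^ (2 : ℕ) := (sq_abs _).symm
          _ = |g x| ^ ((2 : ℕ) : ℝ) := (Real.rpow_natCast _ 2).symm
          _ = |g x| ^ ((1 - κ) + (1 + κ)) := by norm_num
          _ = |g x| ^ (1 - κ) * |g x| ^ (1 + κ) := Real.rpow_add h0 _ _
          _ ≤ M ^ (1 - κ) * |g x| ^ (1 + κ) :=
              mul_le_mul_of_nonneg_right
                (Real.rpow_le_rpow (abs_nonneg _) (hgb x) (by linarith))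
                (Real.rpow_nonneg (abs_nonneg _) _)
      have hint1 : Integrable (fun x => M ^ (1 - κ) * |g x| ^ (1 + κ)) P := by
        refine (integrable_const (M ^ (1 - κ) * M ^ (1 + κ))).mono'
          ((((Real.continuous_rpow_const (by linarith : (0:ℝ) ≤ 1 + κ)).measurable.comp
            hg.abs).const_mul _)).aestronglyMeasurable ?_
        filter_upwards with x
        rw [Real.norm_eq_abs, abs_mul, abs_of_nonneg (Real.rpow_nonneg (abs_nonneg _) _),
          abs_of_nonneg (Real.rpow_nonneg hM.le _)]
        exact mul_le_mul_of_nonneg_left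
          (Real.rpow_le_rpow (abs_nonneg _) (hgb x) (by linarith))
          (Real.rpow_nonneg hM.le _)
      calc ∫ x, g x ^ 2 ∂P ≤ ∫ x, M ^ (1 - κ) * |g x| ^ (1 + κ) ∂P :=
            integral_mono_of_nonneg (by filter_upwards with x using sq_nonneg _)
              hint1 (by filter_upwards with x using hpt x)
      _ = M ^ (1 - κ) * ∫ x, |g x| ^ (1 + κ) ∂P := integral_const_mul _ _
      _ ≤ v := by
          rw [hv]
          exact mul_le_mul_of_nonneg_left hgm (Real.rpow_nonneg hM.le _)
    have hbdd : ∀ᵐ ω ∂μ, |Y i ω| ≤ M := by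
      filter_upwards [hεval i] with ω h
      rcases h with h | h <;>
        · simp only [hY, abs_mul, h]
          simpa using hgb (X i ω)
    exact mgf_le_bernstein μ (Y i) (hYmeas i).aestronglyMeasurable M v t hM.le hv0.le
      hbdd hmean hvar ht htM
  -- combine
  have hfin : (fun ω => ∑ i, Y i ω) = ∑ i, Y i := by
    funext ω; simp [Finset.sum_apply]
  calc ∫ ω, Real.exp (t * ∑ i, ε i ω * g (X i ω)) ∂μ
      = mgf (∑ i, Y i) μ t := by
        rw [mgf, ← hfin]
    _ = ∏ i, mgf (Y i) μ t := hsum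
    _ ≤ ∏ _i : Fin n, Real.exp (v * t ^ 2 / (2 * (1 - t * M / 3))) :=
        Finset.prod_le_prod (fun i _ => mgf_nonneg) (fun i _ => hper i)
    _ = Real.exp (n * v * t ^ 2 / (2 * (1 - t * M / 3))) := by
        rw [Finset.prod_const, ← Real.exp_nat_mul]
        congr 1
        simp [Finset.card_univ]
        ring

/-- Maximal inequality for the Rademacher average of finitely many uniformly bounded
functions: if `X_1,…,X_n` are i.i.d. with law `P`, `ε_1,…,ε_n` are i.i.d. Rademacher
signs independent of the `X_i`, `‖f_r‖_∞ ≤ M` and `E|f_r(X_1)|^{1+κ} ≤ σ^{1+κ}` for all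
`r ≤ N`, then `E[max_r |P_n^ε f_r|] ≤ (M^{(1−κ)/2}/√n)√(2σ^{1+κ} log(2N)) + (M/(3n)) log(2N)`. -/
theorem rademacher_maximal_inequality_bounded
    {𝒳 Ω : Type*} [MeasurableSpace 𝒳] [MeasurableSpace Ω]
    (μ : Measure Ω) [IsProbabilityMeasure μ]
    (P : Measure 𝒳) [IsProbabilityMeasure P]
    (n : ℕ) (hn : 0 < n)
    (X : Fin n → Ω → 𝒳) (ε : Fin n → Ω → ℝ)
    (hXmeas : ∀ i, Measurable (X i)) (hεmeas : ∀ i, Measurable (ε i))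
    (hXlaw : ∀ i, μ.map (X i) = P)
    (hεval : ∀ i, ∀ᵐ ω ∂μ, ε i ω = 1 ∨ ε i ω = -1)
    (hεsym : ∀ i, μ {ω | ε i ω = 1} = 1 / 2)
    (hpairsindep : iIndepFun
      (fun i ω => (X i ω, ε i ω)) μ)
    (hXεindep : ∀ i, IndepFun (X i) (ε i) μ)
    (κ M σ : ℝ) (hκ : κ ∈ Set.Icc (0 : ℝ) 1) (hM : 0 < M) (hσ : 0 < σ)
    (N : ℕ) (hN : 0 < N) (f : Fin N → 𝒳 → ℝ)
    (hfmeas : ∀ r, Measurable (f r))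
    (hfbdd : ∀ r x, |f r x| ≤ M)
    (hfmom : ∀ r, ∫ x, |f r x| ^ (1 + κ) ∂P ≤ σ ^ (1 + κ)) :
    (∫ ω, (⨆ r : Fin N, |(n : ℝ)⁻¹ * ∑ i, ε i ω * f r (X i ω)|) ∂μ) ≤
      M ^ ((1 - κ) / 2) / Real.sqrt n * Real.sqrt (2 * σ ^ (1 + κ) * Real.log (2 * N)) +
        M / (3 * n) * Real.log (2 * N) := by
  obtain ⟨hκ0, hκ1⟩ := hκ
  have hn0 : (0 : ℝ) < n := by exact_mod_cast hn
  have hN1 : (1 : ℝ) ≤ N := by exact_mod_cast hN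
  set L : ℝ := Real.log (2 * N) with hLdef
  have hL : 0 < L := Real.log_pos (by linarith)
  set v : ℝ := M ^ (1 - κ) * σ ^ (1 + κ) with hvdef
  have hv0 : 0 < v := mul_pos (Real.rpow_pos_of_pos hM _) (Real.rpow_pos_of_pos hσ _)
  set a : ℝ := Real.sqrt (n * v / (2 * L)) with hadef
  have ha : 0 < a := Real.sqrt_pos.mpr (by positivity)
  have ha2 : a ^ 2 = n * v / (2 * L) := Real.sq_sqrt (by positivity)
  have hkey : n * v = 2 * L * a ^ 2 := by rw [ha2]; field_simp
  set t : ℝ := (a + M / 3)⁻¹ with htdef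
  have haM : 0 < a + M / 3 := by linarith
  have ht0 : 0 < t := by rw [htdef]; positivity
  have htM : t * M < 3 := by
    rw [htdef, inv_mul_lt_iff₀ haM]
    linarith
  have hD : 2 * (1 - t * M / 3) = 2 * a * t := by
    rw [htdef]
    field_simp
    ring
  have hDpos : 0 < 2 * (1 - t * M / 3) := by rw [hD]; positivity
  set Z : Fin N → Ω → ℝ := fun r ω => ∑ i, ε i ω * f r (X i ω) with hZdef
  have hZmeas : ∀ r, Measurable (Z r) := by
    intro r
    exact Finset.measurable_sum _ (fun i _ => (hεmeas i).mul ((hfmeas r).comp (hXmeas i)))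
  set Bd : ℝ := Real.exp (n * v * t ^ 2 / (2 * (1 - t * M / 3))) with hBdef
  have hmgf1 : ∀ r, ∫ ω, Real.exp (t * Z r ω) ∂μ ≤ Bd := fun r =>
    mgf_sum_le_bernstein μ P n X ε hXmeas hεmeas hXlaw hεval hεsym hpairsindep hXεindep
      κ M σ ⟨hκ0, hκ1⟩ hM hσ (f r) (hfmeas r) (hfbdd r) (hfmom r) t ht0.le htM
  have hmgf2 : ∀ r, ∫ ω, Real.exp (-(t * Z r ω)) ∂μ ≤ Bd := by
    intro r
    have h := mgf_sum_le_bernstein μ P n X ε hXmeas hεmeas hXlaw hεval hεsym hpairsindep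
      hXεindep κ M σ ⟨hκ0, hκ1⟩ hM hσ (fun x => -(f r x)) (hfmeas r).neg
      (fun x => by simpa [abs_neg] using hfbdd r x)
      (by simpa [abs_neg] using hfmom r) t ht0.le htM
    have heq : (fun ω => Real.exp (t * ∑ i, ε i ω * -(f r (X i ω))))
        = fun ω => Real.exp (-(t * Z r ω)) := by
      funext ω
      congr 1
      rw [hZdef]
      simp [mul_neg, Finset.sum_neg_distrib]
    rw [heq] at h
    exact h
  set W : Ω → ℝ := fun ω => ∑ r, (Real.exp (t * Z r ω) + Real.exp (-(t * Z r ω))) with hWdef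
  have r0 : Fin N := ⟨0, hN⟩
  haveI : Nonempty (Fin N) := ⟨r0⟩
  have hterm2 : ∀ (x : ℝ), 2 ≤ Real.exp x + Real.exp (-x) := by
    intro x
    have h1 := Real.add_one_le_exp x
    have h2 := Real.add_one_le_exp (-x)
    linarith
  have hW2 : ∀ ω, 2 ≤ W ω := by
    intro ω
    calc (2 : ℝ) ≤ Real.exp (t * Z r0 ω) + Real.exp (-(t * Z r0 ω)) := hterm2 _
    _ ≤ W ω := Finset.single_le_sum
        (f := fun r => Real.exp (t * Z r ω) + Real.exp (-(t * Z r ω)))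
        (fun r _ => by positivity) (Finset.mem_univ r0)
  have hW0 : ∀ ω, 0 < W ω := fun ω => lt_of_lt_of_le two_pos (hW2 ω)
  have hWmeas : Measurable W :=
    Finset.measurable_sum _ (fun r _ =>
      (((hZmeas r).const_mul t).exp).add (((hZmeas r).const_mul t).neg.exp))
  -- pointwise bound on the sup
  have hsup_le : ∀ ω, (⨆ r, |(n : ℝ)⁻¹ * Z r ω|) ≤ ((n : ℝ) * t)⁻¹ * Real.log (W ω) := by
    intro ω
    apply ciSup_le
    intro r
    have h1 : Real.exp (t * |Z r ω|) ≤ W ω := by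
      have hle : Real.exp (t * |Z r ω|) ≤ Real.exp (t * Z r ω) + Real.exp (-(t * Z r ω)) := by
        rcases abs_cases (Z r ω) with ⟨h, _⟩ | ⟨h, _⟩
        · rw [h]
          exact le_add_of_nonneg_right (Real.exp_pos _).le
        · rw [h, mul_neg]
          exact le_add_of_nonneg_left (Real.exp_pos _).le
      exact hle.trans (Finset.single_le_sum
        (f := fun r => Real.exp (t * Z r ω) + Real.exp (-(t * Z r ω)))
        (fun r _ => by positivity) (Finset.mem_univ r))
    have h2 : t * |Z r ω| ≤ Real.log (W ω) :=
      (Real.le_log_iff_exp_le (hW0 ω)).mpr h1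
    have h3 : |Z r ω| ≤ t⁻¹ * Real.log (W ω) := by
      rw [inv_mul_eq_div, le_div_iff₀ ht0, mul_comm]
      exact h2
    rw [abs_mul, abs_of_nonneg (inv_nonneg.mpr hn0.le), mul_inv, mul_assoc]
    exact mul_le_mul_of_nonneg_left h3 (inv_nonneg.mpr hn0.le)
  -- boundedness facts
  have haeε : ∀ᵐ ω ∂μ, ∀ i, ε i ω = 1 ∨ ε i ω = -1 := ae_all_iff.mpr hεval
  have hZbdd : ∀ᵐ ω ∂μ, ∀ r, |Z r ω| ≤ n * M := by
    filter_upwards [haeε] with ω h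
    intro r
    calc |Z r ω| ≤ ∑ i, |ε i ω * f r (X i ω)| := Finset.abs_sum_le_sum_abs _ _
    _ ≤ ∑ _i : Fin n, M := by
        refine Finset.sum_le_sum fun i _ => ?_
        rw [abs_mul]
        rcases h i with hi | hi <;> simp [hi, hfbdd r (X i ω)]
    _ = n * M := by rw [Finset.sum_const, Finset.card_univ, Fintype.card_fin, nsmul_eq_mul]
  set C : ℝ := 2 * N * Real.exp (t * (n * M)) with hCdef
  have hWb : ∀ᵐ ω ∂μ, W ω ≤ C := by
    filter_upwards [hZbdd] with ω h
    calc W ω ≤ ∑ _r : Fin N, 2 * Real.exp (t * (n * M)) := by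
          refine Finset.sum_le_sum fun r _ => ?_
          have h1 : t * Z r ω ≤ t * (n * M) := by
            refine mul_le_mul_of_nonneg_left ?_ ht0.le
            exact (le_abs_self _).trans (h r)
          have h2 : -(t * Z r ω) ≤ t * (n * M) := by
            rw [← mul_neg]
            refine mul_le_mul_of_nonneg_left ?_ ht0.le
            exact (neg_le_abs _).trans (h r)
          have := Real.exp_le_exp.mpr h1
          have := Real.exp_le_exp.mpr h2
          linarith
    _ = C := by
        rw [Finset.sum_const, Finset.card_univ, Fintype.card_fin, nsmul_eq_mul, hCdef]
        ring
  have hWint : Integrable W μ := by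
    refine (integrable_const C).mono' hWmeas.aestronglyMeasurable ?_
    filter_upwards [hWb] with ω h
    rw [Real.norm_eq_abs, abs_of_pos (hW0 ω)]
    exact h
  have hC2 : 2 ≤ C := by
    rw [hCdef]
    have h1 : (1 : ℝ) ≤ Real.exp (t * (n * M)) := by
      rw [Real.one_le_exp_iff]  -- may fail; fallback below
      positivity
    nlinarith
  have hlogWint : Integrable (fun ω => Real.log (W ω)) μ := by
    refine (integrable_const (Real.log C)).mono'
      (Real.measurable_log.comp hWmeas).aestronglyMeasurable ?_
    filter_upwards [hWb] with ω h
    rw [Real.norm_eq_abs, abs_of_nonneg]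
    · exact Real.log_le_log (hW0 ω) h
    · have := Real.log_le_log (by norm_num : (0:ℝ) < 2) (hW2 ω)
      have h2 : (0:ℝ) ≤ Real.log 2 := Real.log_nonneg (by norm_num)
      linarith
  -- integral of W
  have hint1 : ∀ r, Integrable (fun ω => Real.exp (t * Z r ω)) μ := by
    intro r
    refine (integrable_const (Real.exp (t * (n * M)))).mono'
      (((hZmeas r).const_mul t).exp).aestronglyMeasurable ?_
    filter_upwards [hZbdd] with ω h
    rw [Real.norm_eq_abs, Real.abs_exp, Real.exp_le_exp]
    exact mul_le_mul_of_nonneg_left ((le_abs_self _).trans (h r)) ht0.le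
  have hint2 : ∀ r, Integrable (fun ω => Real.exp (-(t * Z r ω))) μ := by
    intro r
    refine (integrable_const (Real.exp (t * (n * M)))).mono'
      (((hZmeas r).const_mul t).neg.exp).aestronglyMeasurable ?_
    filter_upwards [hZbdd] with ω h
    rw [Real.norm_eq_abs, Real.abs_exp, Real.exp_le_exp, ← mul_neg]
    exact mul_le_mul_of_nonneg_left ((neg_le_abs _).trans (h r)) ht0.le
  have hEW : ∫ ω, W ω ∂μ ≤ 2 * N * Bd := by
    have hsplit : ∫ ω, W ω ∂μ
        = ∑ r, ∫ ω, (Real.exp (t * Z r ω) + Real.exp (-(t * Z r ω))) ∂μ := by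
      rw [hWdef]
      exact integral_finset_sum _ (fun r _ => (hint1 r).add (hint2 r))
    rw [hsplit]
    calc ∑ r, ∫ ω, (Real.exp (t * Z r ω) + Real.exp (-(t * Z r ω))) ∂μ
        ≤ ∑ _r : Fin N, 2 * Bd := by
          refine Finset.sum_le_sum fun r _ => ?_
          rw [integral_add (hint1 r) (hint2 r)]
          have := hmgf1 r
          have := hmgf2 r
          linarith
    _ = 2 * N * Bd := by
        rw [Finset.sum_const, Finset.card_univ, Fintype.card_fin, nsmul_eq_mul]
        ring
  have hc2 : 2 ≤ ∫ ω, W ω ∂μ := by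
    have h0 : (2 : ℝ) = ∫ _ω, (2 : ℝ) ∂μ := by simp
    rw [h0]
    exact integral_mono (integrable_const 2) hWint hW2
  set c : ℝ := ∫ ω, W ω ∂μ with hcdef
  have hc0 : 0 < c := lt_of_lt_of_le two_pos hc2
  have hlogE : ∫ ω, Real.log (W ω) ∂μ ≤ Real.log c := by
    have hpt : ∀ ω, Real.log (W ω) ≤ Real.log c + (W ω / c - 1) := by
      intro ω
      have h := Real.log_le_sub_one_of_pos (div_pos (hW0 ω) hc0)
      rw [Real.log_div (hW0 ω).ne' hc0.ne'] at h
      linarith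
    calc ∫ ω, Real.log (W ω) ∂μ
        ≤ ∫ ω, (Real.log c + (W ω / c - 1)) ∂μ := by
          have hint3 : Integrable (fun ω => W ω / c - 1) μ :=
            (hWint.div_const c).sub (integrable_const 1)
          exact integral_mono hlogWint ((integrable_const _).add hint3) hpt
    _ = Real.log c + (c / c - 1) := by
        have hint3 : Integrable (fun ω => W ω / c - 1) μ :=
          (hWint.div_const c).sub (integrable_const 1)
        rw [integral_add (integrable_const _) hint3,
          integral_sub (hWint.div_const c) (integrable_const 1), integral_div]
        simp [hcdef]
    _ = Real.log c := by
        rw [div_self hc0.ne']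
        ring
  have hlogc : Real.log c ≤ L + n * v * t ^ 2 / (2 * (1 - t * M / 3)) := by
    calc Real.log c ≤ Real.log (2 * N * Bd) := Real.log_le_log hc0 hEW
    _ = L + n * v * t ^ 2 / (2 * (1 - t * M / 3)) := by
        rw [hBdef, Real.log_mul (by positivity) (Real.exp_pos _).ne', Real.log_exp, hLdef]
  -- main chain
  have hsupnonneg : ∀ ω, 0 ≤ ⨆ r, |(n : ℝ)⁻¹ * Z r ω| := by
    intro ω
    exact (abs_nonneg ((n : ℝ)⁻¹ * Z r0 ω)).trans
      (le_ciSup (f := fun r => |(n : ℝ)⁻¹ * Z r ω|)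
        (Set.Finite.bddAbove (Set.finite_range _)) r0)
  have hmain : (∫ ω, (⨆ r : Fin N, |(n : ℝ)⁻¹ * Z r ω|) ∂μ)
      ≤ ((n : ℝ) * t)⁻¹ * (L + n * v * t ^ 2 / (2 * (1 - t * M / 3))) := by
    calc (∫ ω, (⨆ r : Fin N, |(n : ℝ)⁻¹ * Z r ω|) ∂μ)
        ≤ ∫ ω, ((n : ℝ) * t)⁻¹ * Real.log (W ω) ∂μ := by
          refine integral_mono_of_nonneg ?_ (hlogWint.const_mul _) ?_
          · filter_upwards with ω using hsupnonneg ω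
          · filter_upwards with ω using hsup_le ω
    _ = ((n : ℝ) * t)⁻¹ * ∫ ω, Real.log (W ω) ∂μ := integral_const_mul _ _
    _ ≤ ((n : ℝ) * t)⁻¹ * (L + n * v * t ^ 2 / (2 * (1 - t * M / 3))) := by
        refine mul_le_mul_of_nonneg_left (hlogE.trans hlogc) (by positivity)
  -- final algebra
  have halg : ((n : ℝ) * t)⁻¹ * (L + n * v * t ^ 2 / (2 * (1 - t * M / 3)))
      = (2 * a * L + M * L / 3) / n := by
    rw [hD, hkey, htdef]
    field_simp
    ring
  have hsq : (2 * a * L / n) ^ 2 = 2 * v * L / n := by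
    have h4 : (2 * a * L / n) ^ 2 = 4 * a ^ 2 * L ^ 2 / n ^ 2 := by ring
    rw [h4, ha2]
    field_simp
    ring
  have hfirst : M ^ ((1 - κ) / 2) / Real.sqrt n * Real.sqrt (2 * σ ^ (1 + κ) * L)
      = 2 * a * L / n := by
    have h1 : M ^ ((1 - κ) / 2) = Real.sqrt (M ^ (1 - κ)) := by
      rw [Real.sqrt_eq_rpow, ← Real.rpow_mul hM.le]
      congr 1
      ring
    calc M ^ ((1 - κ) / 2) / Real.sqrt n * Real.sqrt (2 * σ ^ (1 + κ) * L)
        = Real.sqrt (M ^ (1 - κ)) * Real.sqrt (2 * σ ^ (1 + κ) * L) / Real.sqrt n := by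
          rw [h1]; ring
    _ = Real.sqrt (M ^ (1 - κ) * (2 * σ ^ (1 + κ) * L)) / Real.sqrt n := by
        rw [Real.sqrt_mul (Real.rpow_nonneg hM.le _)]
    _ = Real.sqrt (M ^ (1 - κ) * (2 * σ ^ (1 + κ) * L) / n) := by
        rw [Real.sqrt_div (by positivity)]
    _ = Real.sqrt (2 * v * L / n) := by
        rw [hvdef]
        congr 1
        ring
    _ = Real.sqrt ((2 * a * L / n) ^ 2) := by rw [hsq]
    _ = 2 * a * L / n := Real.sqrt_sq (by positivity)
  calc (∫ ω, (⨆ r : Fin N, |(n : ℝ)⁻¹ * ∑ i, ε i ω * f r (X i ω)|) ∂μ)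
      = (∫ ω, (⨆ r : Fin N, |(n : ℝ)⁻¹ * Z r ω|) ∂μ) := rfl
  _ ≤ ((n : ℝ) * t)⁻¹ * (L + n * v * t ^ 2 / (2 * (1 - t * M / 3))) := hmain
  _ = (2 * a * L + M * L / 3) / n := halg
  _ = 2 * a * L / n + M / (3 * n) * L := by field_simp
  _ = M ^ ((1 - κ) / 2) / Real.sqrt n * Real.sqrt (2 * σ ^ (1 + κ) * L) + M / (3 * n) * L := by
      rw [hfirst]
end

section
/- Let X be a nonnegative random variable and suppose there exist a, b > 0 such that P( X ≥ a·√(1+t) + b ) ≤ 2·e^{−t} for every t > 0. Then E[X] ≤ c₀·a + b, where c₀ = √(log(2e)) + 2e·∫_{√(log(2e))}^∞ e^{−x²} dx; moreover c₀ ≤ 1.618. -/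
open MeasureTheory Finset

private lemma exp_neg_sum_le {n : ℕ} (hn : Odd n) {t : ℝ} (ht : 0 ≤ t) :
    ∑ j ∈ Finset.range (n + 1), (-t) ^ j / j.factorial ≤ Real.exp (-t) := by
  set S : ℝ → ℝ := fun t => ∑ j ∈ Finset.range (n + 1), (-t) ^ j / j.factorial with hS
  set g : ℝ → ℝ := fun t => Real.exp t * S t with hg
  have hderiv : ∀ x : ℝ, HasDerivAt g (Real.exp x * ((-x) ^ n / n.factorial)) x := by
    intro x
    have hS' : HasDerivAt S (-∑ j ∈ Finset.range n, (-x) ^ j / j.factorial) x := by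
      have h1 : HasDerivAt S
          (∑ j ∈ Finset.range (n + 1), ((j : ℝ) * (-x) ^ (j - 1) * (-1)) / j.factorial) x := by
        apply HasDerivAt.fun_sum
        intro j _
        exact (((hasDerivAt_pow j (-x)).comp x ((hasDerivAt_id x).neg)).div_const _)
      convert h1 using 1
      rw [Finset.sum_range_succ']
      simp only [Nat.cast_zero, zero_mul, Nat.factorial_zero, Nat.cast_one, zero_div, add_zero]
      rw [neg_eq_iff_eq_neg, ← Finset.sum_neg_distrib]
      apply Finset.sum_congr rfl
      intro i _
      have : ((i : ℝ) + 1) ≠ 0 := by positivity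
      field_simp [Nat.factorial_succ]
      rw [show i + 1 - 1 = i by omega, Nat.factorial_succ]; push_cast; ring
    have := (Real.hasDerivAt_exp x).mul hS'
    refine this.congr_deriv ?_
    have hkey : S x - ∑ j ∈ Finset.range n, (-x) ^ j / j.factorial = (-x) ^ n / n.factorial := by
      simp only [hS]; rw [Finset.sum_range_succ]; ring
    rw [← hkey]; ring
  have hanti : AntitoneOn g (Set.Ici (0 : ℝ)) := by
    apply antitoneOn_of_deriv_nonpos (convex_Ici 0)
    · exact (Continuous.continuousOn (by continuity))
    · intro x _; exact (hderiv x).differentiableAt.differentiableWithinAt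
    · intro x hx
      rw [(hderiv x).deriv]
      have hx0 : 0 < x := by simpa using hx
      have h1 : (-x) ^ n ≤ 0 := Odd.pow_nonpos hn (by linarith)
      have : (-x) ^ n / n.factorial ≤ 0 := div_nonpos_of_nonpos_of_nonneg h1 (by positivity)
      exact mul_nonpos_of_nonneg_of_nonpos (Real.exp_pos x).le this
  have hg0 : g 0 = 1 := by
    simp [hg, hS, Finset.sum_range_succ']
  have hgt : g t ≤ 1 := by
    have := hanti (Set.self_mem_Ici) (Set.mem_Ici.2 ht) ht
    rwa [hg0] at this
  have : Real.exp t * S t ≤ 1 := hgt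
  have hrw : S t = Real.exp (-t) * (Real.exp t * S t) := by
    rw [← mul_assoc, ← Real.exp_add]; simp
  calc S t = Real.exp (-t) * (Real.exp t * S t) := hrw
    _ ≤ Real.exp (-t) * 1 := mul_le_mul_of_nonneg_left hgt (Real.exp_pos _).le
    _ = Real.exp (-t) := mul_one _

lemma c0_le :
    Real.sqrt (Real.log (2 * Real.exp 1)) +
        2 * Real.exp 1 *
          (∫ x in Set.Ioi (Real.sqrt (Real.log (2 * Real.exp 1))), Real.exp (-x ^ 2)) ≤ 1.618 := by
  have hlog : Real.log (2 * Real.exp 1) = Real.log 2 + 1 := by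
    rw [Real.log_mul two_ne_zero (Real.exp_ne_zero 1), Real.log_exp]
  rw [hlog]
  set r : ℝ := 1.30120989 with hr
  set u : ℝ := Real.sqrt (Real.log 2 + 1) with hu
  have hint : Integrable (fun x : ℝ => Real.exp (-x ^ 2)) := by
    simpa using integrable_exp_neg_mul_sq one_pos
  have hU : u ≤ 1.3012098912 := by
    rw [hu, show (1.3012098912 : ℝ) = Real.sqrt (1.3012098912 ^ 2) from
      (Real.sqrt_sq (by norm_num)).symm]
    exact Real.sqrt_le_sqrt (by nlinarith [Real.log_two_lt_d9])
  have hrpos : (0 : ℝ) < r := by norm_num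
  have hru : r ≤ u := by
    rw [hu, show r = Real.sqrt (r ^ 2) from (Real.sqrt_sq hrpos.le).symm]
    exact Real.sqrt_le_sqrt (by simp only [hr]; nlinarith [Real.log_two_gt_d9])
  have hJr : (∫ x in Set.Ioi u, Real.exp (-x ^ 2)) ≤ ∫ x in Set.Ioi r, Real.exp (-x ^ 2) := by
    apply setIntegral_mono_set hint.integrableOn
    · filter_upwards with x using (Real.exp_pos _).le
    · exact HasSubset.Subset.eventuallyLE (Set.Ioi_subset_Ioi hru)
  have hsplit : (∫ x in Set.Ioi (0:ℝ), Real.exp (-x ^ 2)) =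
      (∫ x in Set.Ioc (0:ℝ) r, Real.exp (-x ^ 2)) + ∫ x in Set.Ioi r, Real.exp (-x ^ 2) := by
    rw [← setIntegral_union (Set.Ioc_disjoint_Ioi le_rfl) measurableSet_Ioi
      hint.integrableOn hint.integrableOn, Set.Ioc_union_Ioi_eq_Ioi hrpos.le]
  have hgauss : (∫ x in Set.Ioi (0:ℝ), Real.exp (-x ^ 2)) = Real.sqrt Real.pi / 2 := by
    have := integral_gaussian_Ioi 1
    simpa using this
  have hsqrtpi : Real.sqrt Real.pi ≤ 1.7724540318 := by
    rw [show (1.7724540318 : ℝ) = Real.sqrt (1.7724540318 ^ 2) from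
      (Real.sqrt_sq (by norm_num)).symm]
    exact Real.sqrt_le_sqrt (by nlinarith [Real.pi_lt_d6])
  -- lower bound on ∫ x in Ioc 0 r, exp (-x^2)
  have hlow : (∑ j ∈ Finset.range 12, ((-1:ℝ) ^ j / j.factorial) * (r ^ (2*j+1) / (2*j+1)))
      ≤ ∫ x in Set.Ioc (0:ℝ) r, Real.exp (-x ^ 2) := by
    rw [← intervalIntegral.integral_of_le hrpos.le]
    have heval : (∫ x in (0:ℝ)..r, ∑ j ∈ Finset.range 12, (-x ^ 2) ^ j / j.factorial)
        = ∑ j ∈ Finset.range 12, ((-1:ℝ) ^ j / j.factorial) * (r ^ (2*j+1) / (2*j+1)) := by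
      rw [intervalIntegral.integral_finset_sum]
      · apply Finset.sum_congr rfl
        intro j _
        have hfun : ∀ x : ℝ, (-x ^ 2) ^ j / j.factorial
            = ((-1:ℝ) ^ j / j.factorial) * x ^ (2*j) := by
          intro x; rw [neg_pow, ← pow_mul, mul_comm 2 j]; ring
        simp_rw [hfun]
        rw [intervalIntegral.integral_const_mul, integral_pow]
        norm_num
      · intro j _
        exact Continuous.intervalIntegrable (by continuity) _ _
    rw [← heval]
    apply intervalIntegral.integral_mono_on hrpos.le
    · exact Continuous.intervalIntegrable (by continuity) _ _
    · exact hint.intervalIntegrable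
    · intro x _
      exact exp_neg_sum_le (⟨5, by norm_num⟩ : Odd 11) (sq_nonneg x)
  have hsum : (0.8279658 : ℝ) ≤
      ∑ j ∈ Finset.range 12, ((-1:ℝ) ^ j / j.factorial) * (r ^ (2*j+1) / (2*j+1)) := by
    simp only [Finset.sum_range_succ, Finset.sum_range_zero, hr]
    norm_num [Nat.factorial]
  have hJ2 : (∫ x in Set.Ioi u, Real.exp (-x ^ 2)) ≤ 1.7724540318 / 2 - 0.8279658 := by
    have h1 : (∫ x in Set.Ioi r, Real.exp (-x ^ 2))
        = (∫ x in Set.Ioi (0:ℝ), Real.exp (-x ^ 2)) - ∫ x in Set.Ioc (0:ℝ) r, Real.exp (-x ^ 2) := by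
      rw [hsplit]; ring
    rw [h1, hgauss] at hJr
    have := hlow
    nlinarith [hsum]
  have hJ0 : (0:ℝ) ≤ ∫ x in Set.Ioi u, Real.exp (-x ^ 2) := by
    apply setIntegral_nonneg measurableSet_Ioi
    intro x _; exact (Real.exp_pos _).le
  have hE : (2:ℝ) * Real.exp 1 ≤ 5.4365636572 := by
    nlinarith [Real.exp_one_lt_d9]
  have hE0 : (0:ℝ) ≤ 2 * Real.exp 1 := by positivity
  calc u + 2 * Real.exp 1 * (∫ x in Set.Ioi u, Real.exp (-x ^ 2))
      ≤ 1.3012098912 + 5.4365636572 * (1.7724540318 / 2 - 0.8279658) := by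
        exact add_le_add hU (mul_le_mul hE hJ2 hJ0 (by norm_num))
    _ ≤ 1.618 := by norm_num

lemma main_bound
    {Ω : Type*} [MeasurableSpace Ω] (μ : Measure Ω) [IsProbabilityMeasure μ]
    (X : Ω → ℝ) (hXmeas : Measurable X) (hX0 : ∀ ω, 0 ≤ X ω)
    (a b : ℝ) (ha : 0 < a) (hb : 0 < b)
    (htail : ∀ t : ℝ, 0 < t →
      μ {ω | a * Real.sqrt (1 + t) + b ≤ X ω} ≤ ENNReal.ofReal (2 * Real.exp (-t))) :
    (∫ ω, X ω ∂μ) ≤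
      (Real.sqrt (Real.log (2 * Real.exp 1)) +
        2 * Real.exp 1 *
          ∫ x in Set.Ioi (Real.sqrt (Real.log (2 * Real.exp 1))), Real.exp (-x ^ 2)) * a + b := by
  have hlog : Real.log (2 * Real.exp 1) = Real.log 2 + 1 := by
    rw [Real.log_mul two_ne_zero (Real.exp_ne_zero 1), Real.log_exp]
  rw [hlog]
  set u : ℝ := Real.sqrt (Real.log 2 + 1) with hu
  set J : ℝ := ∫ x in Set.Ioi u, Real.exp (-x ^ 2) with hJ
  have hlog2 : (0:ℝ) < Real.log 2 := Real.log_pos (by norm_num)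
  have hu2 : u ^ 2 = Real.log 2 + 1 := Real.sq_sqrt (by linarith)
  have hu1 : 1 < u := by
    nlinarith [Real.sqrt_nonneg (Real.log 2 + 1), hu2]
  have hu0 : 0 < u := by linarith
  set s₀ : ℝ := a * u + b with hs₀
  have hs₀pos : 0 < s₀ := by positivity
  have hJ0 : 0 ≤ J := setIntegral_nonneg measurableSet_Ioi (fun x _ => (Real.exp_pos _).le)
  -- the gaussian-type bound function
  set g : ℝ → ℝ := fun t => 2 * Real.exp 1 * Real.exp (-((t - b) / a) ^ 2) with hg
  have hgint : Integrable g := by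
    have h1 : Integrable (fun x : ℝ => Real.exp (-(1 / a ^ 2) * x ^ 2)) :=
      integrable_exp_neg_mul_sq (by positivity)
    have h2 : Integrable (fun t : ℝ => Real.exp (-(1 / a ^ 2) * (t - b) ^ 2)) :=
      h1.comp_sub_right b
    have h3 : (fun t : ℝ => Real.exp (-((t - b) / a) ^ 2))
        = fun t : ℝ => Real.exp (-(1 / a ^ 2) * (t - b) ^ 2) := by
      funext t; congr 1; field_simp
    exact (h3 ▸ h2).const_mul _
  -- layer cake
  have key : ∫⁻ ω, ENNReal.ofReal (X ω) ∂μ = ∫⁻ t in Set.Ioi 0, μ {ω | t ≤ X ω} :=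
    lintegral_eq_lintegral_meas_le μ (Filter.Eventually.of_forall hX0) hXmeas.aemeasurable
  -- split the lintegral
  have hsplit : (∫⁻ t in Set.Ioi (0:ℝ), μ {ω | t ≤ X ω})
      = (∫⁻ t in Set.Ioc (0:ℝ) s₀, μ {ω | t ≤ X ω}) + ∫⁻ t in Set.Ioi s₀, μ {ω | t ≤ X ω} := by
    rw [← lintegral_union measurableSet_Ioi (Set.Ioc_disjoint_Ioi le_rfl),
      Set.Ioc_union_Ioi_eq_Ioi hs₀pos.le]
  -- first piece
  have hpiece1 : (∫⁻ t in Set.Ioc (0:ℝ) s₀, μ {ω | t ≤ X ω}) ≤ ENNReal.ofReal s₀ := by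
    calc (∫⁻ t in Set.Ioc (0:ℝ) s₀, μ {ω | t ≤ X ω})
        ≤ ∫⁻ _ in Set.Ioc (0:ℝ) s₀, 1 :=
          setLIntegral_mono measurable_const (fun t _ => prob_le_one)
      _ = ENNReal.ofReal s₀ := by
          rw [setLIntegral_const, one_mul, Real.volume_Ioc, sub_zero]
  -- pointwise tail bound on the second piece
  have hpt : ∀ t ∈ Set.Ioi s₀, μ {ω | t ≤ X ω} ≤ ENNReal.ofReal (g t) := by
    intro t ht
    have ht' : s₀ < t := ht
    have hq : u < (t - b) / a := by
      rw [lt_div_iff₀ ha]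
      nlinarith
    have hq1 : 1 < (t - b) / a := lt_trans hu1 hq
    set τ : ℝ := ((t - b) / a) ^ 2 - 1 with hτ
    have hτpos : 0 < τ := by rw [hτ]; nlinarith
    have hsq : Real.sqrt (1 + τ) = (t - b) / a := by
      rw [hτ, show 1 + (((t - b) / a) ^ 2 - 1) = ((t - b) / a) ^ 2 by ring]
      exact Real.sqrt_sq (by linarith)
    have hset : {ω | a * Real.sqrt (1 + τ) + b ≤ X ω} = {ω | t ≤ X ω} := by
      rw [hsq]
      have : a * ((t - b) / a) + b = t := by field_simp; ring
      rw [this]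
    have hval : 2 * Real.exp (-τ) = g t := by
      rw [hg, hτ]
      rw [show -(((t - b) / a) ^ 2 - 1) = 1 + -((t - b) / a) ^ 2 by ring, Real.exp_add]
      ring
    calc μ {ω | t ≤ X ω} = μ {ω | a * Real.sqrt (1 + τ) + b ≤ X ω} := by rw [hset]
      _ ≤ ENNReal.ofReal (2 * Real.exp (-τ)) := htail τ hτpos
      _ = ENNReal.ofReal (g t) := by rw [hval]
  -- second piece
  have hpiece2 : (∫⁻ t in Set.Ioi s₀, μ {ω | t ≤ X ω})
      ≤ ENNReal.ofReal (2 * Real.exp 1 * a * J) := by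
    have hgm : Measurable fun t => ENNReal.ofReal (g t) := by
      apply Measurable.ennreal_ofReal; rw [hg]; fun_prop
    calc (∫⁻ t in Set.Ioi s₀, μ {ω | t ≤ X ω})
        ≤ ∫⁻ t in Set.Ioi s₀, ENNReal.ofReal (g t) := setLIntegral_mono hgm hpt
      _ = ENNReal.ofReal (∫ t in Set.Ioi s₀, g t) :=
          (ofReal_integral_eq_lintegral_ofReal hgint.integrableOn
            (Filter.Eventually.of_forall (fun t => by positivity))).symm
      _ = ENNReal.ofReal (2 * Real.exp 1 * a * J) := by
          congr 1
          have hshift : (∫ t in Set.Ioi s₀, Real.exp (-((t - b) / a) ^ 2))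
              = ∫ x in Set.Ioi (a * u), Real.exp (-(x / a) ^ 2) := by
            have hmp := measurePreserving_add_right (volume : Measure ℝ) b
            have hemb : MeasurableEmbedding (fun x : ℝ => x + b) :=
              (MeasurableEquiv.addRight b).measurableEmbedding
            have := hmp.setIntegral_preimage_emb hemb
              (fun t => Real.exp (-((t - b) / a) ^ 2)) (Set.Ioi s₀)
            rw [Set.preimage_add_const_Ioi] at this
            rw [← this]
            simp only [add_sub_cancel_right]
            rw [show s₀ - b = a * u by rw [hs₀]; ring]
          have hscale : (∫ x in Set.Ioi (a * u), Real.exp (-(x / a) ^ 2)) = a * J := by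
            have h := integral_comp_mul_left_Ioi (fun x => Real.exp (-x ^ 2)) (a * u)
              (inv_pos.mpr ha)
            rw [show a⁻¹ * (a * u) = u by field_simp] at h
            simp only [inv_inv, smul_eq_mul] at h
            rw [hJ, ← h]
            apply setIntegral_congr_fun measurableSet_Ioi
            intro x _
            show Real.exp (-(x / a) ^ 2) = Real.exp (-(a⁻¹ * x) ^ 2)
            rw [div_eq_inv_mul]
          rw [hg]
          simp only [mul_assoc]
          rw [integral_const_mul, integral_const_mul, hshift, hscale]
  -- combine
  have hfin : (∫⁻ ω, ENNReal.ofReal (X ω) ∂μ)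
      ≤ ENNReal.ofReal (s₀ + 2 * Real.exp 1 * a * J) := by
    rw [key, hsplit]
    have h2 : (0:ℝ) ≤ 2 * Real.exp 1 * a * J := by
      have := Real.exp_pos 1
      have : (0:ℝ) ≤ 2 * Real.exp 1 * a := by positivity
      exact mul_nonneg this hJ0
    calc (∫⁻ t in Set.Ioc (0:ℝ) s₀, μ {ω | t ≤ X ω}) + ∫⁻ t in Set.Ioi s₀, μ {ω | t ≤ X ω}
        ≤ ENNReal.ofReal s₀ + ENNReal.ofReal (2 * Real.exp 1 * a * J) :=
          add_le_add hpiece1 hpiece2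
      _ = ENNReal.ofReal (s₀ + 2 * Real.exp 1 * a * J) := (ENNReal.ofReal_add hs₀pos.le h2).symm
  have hint : (∫ ω, X ω ∂μ) = (∫⁻ ω, ENNReal.ofReal (X ω) ∂μ).toReal :=
    integral_eq_lintegral_of_nonneg_ae (Filter.Eventually.of_forall hX0)
      hXmeas.aestronglyMeasurable
  rw [hint]
  have h2 : (0:ℝ) ≤ 2 * Real.exp 1 * a * J :=
    mul_nonneg (by positivity) hJ0
  calc (∫⁻ ω, ENNReal.ofReal (X ω) ∂μ).toReal
      ≤ s₀ + 2 * Real.exp 1 * a * J :=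
        ENNReal.toReal_le_of_le_ofReal (by linarith) hfin
    _ = (u + 2 * Real.exp 1 * J) * a + b := by rw [hs₀]; ring

/-- If a nonnegative random variable `X` satisfies the tail bound
`P(X ≥ a√(1+t) + b) ≤ 2 e^{−t}` for all `t > 0`, then `E[X] ≤ c₀ a + b`, where
`c₀ = √(log(2e)) + 2e ∫_{√(log(2e))}^∞ e^{−x²} dx`; moreover `c₀ ≤ 1.618`. -/
theorem expectation_from_subgaussian_tail
    {Ω : Type*} [MeasurableSpace Ω] (μ : Measure Ω) [IsProbabilityMeasure μ]
    (X : Ω → ℝ) (hXmeas : Measurable X) (hX0 : ∀ ω, 0 ≤ X ω)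
    (a b : ℝ) (ha : 0 < a) (hb : 0 < b)
    (htail : ∀ t : ℝ, 0 < t →
      μ {ω | a * Real.sqrt (1 + t) + b ≤ X ω} ≤ ENNReal.ofReal (2 * Real.exp (-t))) :
    (∫ ω, X ω ∂μ) ≤
      (Real.sqrt (Real.log (2 * Real.exp 1)) +
        2 * Real.exp 1 *
          ∫ x in Set.Ioi (Real.sqrt (Real.log (2 * Real.exp 1))), Real.exp (-x ^ 2)) * a + b
    ∧ Real.sqrt (Real.log (2 * Real.exp 1)) +
        2 * Real.exp 1 *
          (∫ x in Set.Ioi (Real.sqrt (Real.log (2 * Real.exp 1))), Real.exp (-x ^ 2)) ≤ 1.618 :=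
  ⟨main_bound μ X hXmeas hX0 a b ha hb htail, c0_le⟩
end

section
/- Let 0 < c < e^{−1}, a ∈ [0,1), and b ≥ 0. Then for every k₁ > 1 and k₂ > 0 satisfying k₁·(1 − a − k₂ b) ≥ 1 − a and a + k₂ b < 1, one has ∫_0^c x^{−a}·(log(1/x))^b dx ≤ ( k₂^{−b}/(1 − a − k₂ b) + k₁^b/(1 − a) )·c^{1−a}·(log(1/c))^b. -/
open MeasureTheory

lemma aux_log_le_div_exp {s : ℝ} (hs : 0 < s) : Real.log s ≤ s / Real.exp 1 := by
  have h := Real.log_le_sub_one_of_pos (div_pos hs (Real.exp_pos 1))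
  rw [Real.log_div hs.ne' (Real.exp_pos 1).ne', Real.log_exp] at h
  linarith

lemma aux_integral_Ioo_rpow {t p : ℝ} (ht : 0 ≤ t) (hp : -1 < p) :
    ∫ x in Set.Ioo (0:ℝ) t, x ^ p = t ^ (p+1) / (p+1) := by
  rw [← integral_Ioc_eq_integral_Ioo, ← intervalIntegral.integral_of_le ht,
    integral_rpow (Or.inl hp), Real.zero_rpow (by linarith), sub_zero]

lemma aux_integrableOn_rpow {t p : ℝ} (hp : -1 < p) :
    IntegrableOn (fun x : ℝ => x ^ p) (Set.Ioo (0:ℝ) t) := by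
  exact ((intervalIntegral.intervalIntegrable_rpow' hp).1).mono_set Set.Ioo_subset_Ioc_self


/-- For `0 < c < e^{−1}`, `a ∈ [0,1)`, `b ≥ 0`, and any `k₁ > 1`, `k₂ > 0` with
`k₁(1 − a − k₂ b) ≥ 1 − a` and `a + k₂ b < 1`:
`∫_0^c x^{−a} (log(1/x))^b dx ≤ (k₂^{−b}/(1−a−k₂b) + k₁^b/(1−a)) c^{1−a} (log(1/c))^b`. -/
theorem integral_rpow_log_bound (c a b k₁ k₂ : ℝ)
    (hc0 : 0 < c) (hce : c < Real.exp (-1))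
    (ha : a ∈ Set.Ico (0 : ℝ) 1) (hb : 0 ≤ b)
    (hk₁ : 1 < k₁) (hk₂ : 0 < k₂)
    (h1 : 1 - a ≤ k₁ * (1 - a - k₂ * b)) (h2 : a + k₂ * b < 1) :
    (∫ x in Set.Ioo (0 : ℝ) c, x ^ (-a) * Real.log (1 / x) ^ b) ≤
      (k₂ ^ (-b) / (1 - a - k₂ * b) + k₁ ^ b / (1 - a)) * c ^ (1 - a) * Real.log (1 / c) ^ b := by
  obtain ⟨ha0, ha1⟩ := ha
  have hc1 : c < 1 := hce.trans (Real.exp_lt_one_iff.mpr (by norm_num))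
  set L := Real.log (1 / c) with hLdef
  have hlogc : Real.log c < -1 := (Real.log_lt_iff_lt_exp hc0).mpr hce
  have hL1 : 1 < L := by rw [hLdef, one_div, Real.log_inv]; linarith
  have hq : 0 < 1 - a - k₂ * b := by linarith
  have h1a : 0 < 1 - a := by linarith
  set d := c ^ k₁ with hddef
  have hd0 : 0 < d := Real.rpow_pos_of_pos hc0 k₁
  have hdc : d < c := by
    have := Real.rpow_lt_rpow_of_exponent_gt hc0 hc1 hk₁
    rwa [Real.rpow_one] at this
  have hd1 : d < 1 := hdc.trans hc1
  have he0 : (0:ℝ) < Real.exp 1 := Real.exp_pos 1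
  set f : ℝ → ℝ := fun x => x ^ (-a) * Real.log (1 / x) ^ b with hfdef
  have hfm : Measurable f := by measurability
  -- nonnegativity of f on (0,1)
  have hf_nonneg : ∀ x : ℝ, 0 < x → x < 1 → 0 ≤ f x := by
    intro x hx0 hx1
    have hlog : 0 ≤ Real.log (1 / x) := Real.log_nonneg (by rw [le_div_iff₀ hx0]; linarith)
    exact mul_nonneg (Real.rpow_nonneg hx0.le _) (Real.rpow_nonneg hlog _)
  -- pointwise bound on (0, d)
  have hbound1 : ∀ x ∈ Set.Ioo (0:ℝ) d, f x ≤ (k₂ * Real.exp 1) ^ (-b) * x ^ (-(a + k₂ * b)) := by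
    intro x hx
    obtain ⟨hx0, hxd⟩ := hx
    have hx1 : x < 1 := hxd.trans hd1
    have hs : (0:ℝ) < x ^ (-k₂) := Real.rpow_pos_of_pos hx0 _
    have hke : (0:ℝ) < k₂ * Real.exp 1 := by positivity
    have hlog : Real.log (1 / x) ≤ x ^ (-k₂) / (k₂ * Real.exp 1) := by
      have h2' := aux_log_le_div_exp hs
      rw [Real.log_rpow hx0, le_div_iff₀ he0] at h2'
      rw [one_div, Real.log_inv, le_div_iff₀ hke]
      nlinarith
    have hlognn : 0 ≤ Real.log (1 / x) := Real.log_nonneg (by rw [le_div_iff₀ hx0]; linarith)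
    have hpow : Real.log (1 / x) ^ b ≤ (x ^ (-k₂) / (k₂ * Real.exp 1)) ^ b :=
      Real.rpow_le_rpow hlognn hlog hb
    have : f x ≤ x ^ (-a) * (x ^ (-k₂) / (k₂ * Real.exp 1)) ^ b :=
      mul_le_mul_of_nonneg_left hpow (Real.rpow_nonneg hx0.le _)
    refine this.trans (le_of_eq ?_)
    rw [Real.div_rpow (Real.rpow_nonneg hx0.le _) hke.le, ← Real.rpow_mul hx0.le,
      Real.rpow_neg hke.le, show -(a + k₂ * b) = -a + -k₂ * b by ring, Real.rpow_add hx0]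
    ring
  -- pointwise bound on [d, c)
  have hbound2 : ∀ x ∈ Set.Ico d c, f x ≤ (k₁ * L) ^ b * x ^ (-a) := by
    intro x hx
    obtain ⟨hxd, hxc⟩ := hx
    have hx0 : 0 < x := hd0.trans_le hxd
    have hx1 : x < 1 := hxc.trans hc1
    have hlog : Real.log (1 / x) ≤ k₁ * L := by
      have hld : Real.log d = k₁ * Real.log c := Real.log_rpow hc0 k₁
      have := Real.log_le_log hd0 hxd
      rw [one_div, Real.log_inv, hLdef, one_div, Real.log_inv]
      nlinarith
    have hlognn : 0 ≤ Real.log (1 / x) := Real.log_nonneg (by rw [le_div_iff₀ hx0]; linarith)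
    have hpow : Real.log (1 / x) ^ b ≤ (k₁ * L) ^ b := Real.rpow_le_rpow hlognn hlog hb
    calc f x ≤ x ^ (-a) * (k₁ * L) ^ b :=
          mul_le_mul_of_nonneg_left hpow (Real.rpow_nonneg hx0.le _)
      _ = (k₁ * L) ^ b * x ^ (-a) := mul_comm _ _
  -- integrability
  have hIcosub : Set.Ico d c ⊆ Set.Ioo (0:ℝ) c := fun x hx => ⟨hd0.trans_le hx.1, hx.2⟩
  have hint_g1 : IntegrableOn (fun x : ℝ => (k₂ * Real.exp 1) ^ (-b) * x ^ (-(a + k₂ * b)))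
      (Set.Ioo (0:ℝ) d) := (aux_integrableOn_rpow (by linarith)).const_mul _
  have hint_g2 : IntegrableOn (fun x : ℝ => (k₁ * L) ^ b * x ^ (-a)) (Set.Ioo (0:ℝ) c) :=
    (aux_integrableOn_rpow (by linarith)).const_mul _
  have hint_f1 : IntegrableOn f (Set.Ioo (0:ℝ) d) := by
    refine hint_g1.mono' hfm.aestronglyMeasurable ?_
    refine (ae_restrict_mem measurableSet_Ioo).mono fun x hx => ?_
    rw [Real.norm_eq_abs, abs_of_nonneg (hf_nonneg x hx.1 (hx.2.trans hd1))]
    exact hbound1 x hx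
  have hint_f2 : IntegrableOn f (Set.Ico d c) := by
    refine (hint_g2.mono_set hIcosub).mono' hfm.aestronglyMeasurable ?_
    refine (ae_restrict_mem measurableSet_Ico).mono fun x hx => ?_
    rw [Real.norm_eq_abs, abs_of_nonneg (hf_nonneg x (hd0.trans_le hx.1) (hx.2.trans hc1))]
    exact hbound2 x hx
  -- split the integral
  have hsplit : ∫ x in Set.Ioo (0:ℝ) c, f x
      = (∫ x in Set.Ioo (0:ℝ) d, f x) + ∫ x in Set.Ico d c, f x := by
    rw [← setIntegral_union (Set.disjoint_left.mpr fun x hx hx' => hx.2.not_ge hx'.1)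
      measurableSet_Ico hint_f1 hint_f2, Set.Ioo_union_Ico_eq_Ioo hd0 hdc.le]
  -- bound the first piece
  have hI1 : (∫ x in Set.Ioo (0:ℝ) d, f x)
      ≤ (k₂ * Real.exp 1) ^ (-b) * (d ^ (1 - a - k₂ * b) / (1 - a - k₂ * b)) := by
    have := setIntegral_mono_on hint_f1 hint_g1 measurableSet_Ioo hbound1
    refine this.trans (le_of_eq ?_)
    rw [integral_const_mul, aux_integral_Ioo_rpow hd0.le (by linarith : (-1:ℝ) < -(a + k₂ * b))]
    ring_nf
  -- bound the second piece
  have hI2 : (∫ x in Set.Ico d c, f x) ≤ (k₁ * L) ^ b * (c ^ (1 - a) / (1 - a)) := by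
    have hmono := setIntegral_mono_on hint_f2 (hint_g2.mono_set hIcosub)
      measurableSet_Ico hbound2
    have hgrow : (∫ x in Set.Ico d c, (k₁ * L) ^ b * x ^ (-a))
        ≤ ∫ x in Set.Ioo (0:ℝ) c, (k₁ * L) ^ b * x ^ (-a) := by
      refine setIntegral_mono_set hint_g2 ?_ (HasSubset.Subset.eventuallyLE hIcosub)
      refine (ae_restrict_mem measurableSet_Ioo).mono fun x hx => ?_
      have hk₁L : 0 ≤ k₁ * L := by nlinarith
      exact mul_nonneg (Real.rpow_nonneg hk₁L _) (Real.rpow_nonneg hx.1.le _)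
    refine (hmono.trans hgrow).trans (le_of_eq ?_)
    rw [integral_const_mul, aux_integral_Ioo_rpow hc0.le (by linarith : (-1:ℝ) < -a)]
    ring_nf
  -- final arithmetic
  have key1 : (k₂ * Real.exp 1) ^ (-b) * (d ^ (1 - a - k₂ * b) / (1 - a - k₂ * b))
      ≤ k₂ ^ (-b) / (1 - a - k₂ * b) * (c ^ (1 - a) * L ^ b) := by
    have hd_le : d ^ (1 - a - k₂ * b) ≤ c ^ (1 - a) := by
      rw [hddef, ← Real.rpow_mul hc0.le]
      exact Real.rpow_le_rpow_of_exponent_ge hc0 hc1.le (by nlinarith)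
    have he_le : Real.exp 1 ^ (-b) ≤ L ^ b := by
      have e1 : Real.exp 1 ^ (-b) ≤ 1 := by
        rw [Real.exp_one_rpow]
        exact Real.exp_le_one_iff.mpr (by linarith)
      have e2 : (1:ℝ) ≤ L ^ b := by
        rw [← Real.one_rpow b]
        exact Real.rpow_le_rpow zero_le_one hL1.le hb
      linarith
    have hmul : (k₂ * Real.exp 1) ^ (-b) = k₂ ^ (-b) * Real.exp 1 ^ (-b) :=
      Real.mul_rpow hk₂.le (Real.exp_pos 1).le
    have h1' : Real.exp 1 ^ (-b) * d ^ (1 - a - k₂ * b) ≤ L ^ b * c ^ (1 - a) :=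
      mul_le_mul he_le hd_le (Real.rpow_nonneg hd0.le _) (Real.rpow_nonneg (by linarith) _)
    rw [hmul]
    calc k₂ ^ (-b) * Real.exp 1 ^ (-b) * (d ^ (1 - a - k₂ * b) / (1 - a - k₂ * b))
        = (Real.exp 1 ^ (-b) * d ^ (1 - a - k₂ * b)) * (k₂ ^ (-b) / (1 - a - k₂ * b)) := by
          ring
      _ ≤ (L ^ b * c ^ (1 - a)) * (k₂ ^ (-b) / (1 - a - k₂ * b)) :=
          mul_le_mul_of_nonneg_right h1' (by positivity)
      _ = k₂ ^ (-b) / (1 - a - k₂ * b) * (c ^ (1 - a) * L ^ b) := by ring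
  have key2 : (k₁ * L) ^ b * (c ^ (1 - a) / (1 - a))
      = k₁ ^ b / (1 - a) * (c ^ (1 - a) * L ^ b) := by
    rw [Real.mul_rpow (by linarith) (by linarith)]
    ring
  calc (∫ x in Set.Ioo (0 : ℝ) c, f x)
      = (∫ x in Set.Ioo (0:ℝ) d, f x) + ∫ x in Set.Ico d c, f x := hsplit
    _ ≤ k₂ ^ (-b) / (1 - a - k₂ * b) * (c ^ (1 - a) * L ^ b)
        + k₁ ^ b / (1 - a) * (c ^ (1 - a) * L ^ b) :=
        add_le_add (hI1.trans key1) (hI2.trans (le_of_eq key2))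
    _ = (k₂ ^ (-b) / (1 - a - k₂ * b) + k₁ ^ b / (1 - a)) * c ^ (1 - a) * L ^ b := by ring
end

section
/- Let (X, Y) be a random pair with X having law P_X, let τ ∈ (0,∞), and suppose f_{0,τ} ∈ L²(P_X) is a global minimizer of f ↦ E[ℓ_τ(Y − f(X))] over all f ∈ L²(P_X), with E[ℓ_τ(Y − f_{0,τ}(X))] < ∞. Then for every f ∈ L²(P_X): E[ ℓ_τ(Y − f(X)) − ℓ_τ(Y − f_{0,τ}(X)) ] ≤ (1/2)·‖f − f_{0,τ}‖²_{L²(P_X)}. -/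
open MeasureTheory

/-- The Huber loss with parameter `τ`. -/
noncomputable def huberLoss (τ x : ℝ) : ℝ :=
  if |x| ≤ τ then x ^ 2 / 2 else τ * |x| - τ ^ 2 / 2

noncomputable def hclamp (τ a : ℝ) : ℝ := max (-τ) (min a τ)

lemma hclamp_abs_le {τ : ℝ} (hτ : 0 < τ) (a : ℝ) : |hclamp τ a| ≤ τ := by
  rw [abs_le]; exact ⟨le_max_left _ _, max_le (by linarith) (min_le_right _ _)⟩

lemma continuous_hclamp (τ : ℝ) : Continuous (hclamp τ) :=
  continuous_const.max ((continuous_id.min continuous_const))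

lemma measurable_huberLoss (τ : ℝ) : Measurable (huberLoss τ) := by
  unfold huberLoss
  exact Measurable.ite (measurableSet_le (measurable_id.norm) measurable_const)
    (by fun_prop) (by fun_prop)

lemma huber_moreau_le {τ : ℝ} (hτ : 0 < τ) (b y : ℝ) :
    huberLoss τ b ≤ (b - y) ^ 2 / 2 + τ * |y| := by
  unfold huberLoss
  split_ifs with h
  · have h1 : b * y ≤ |b| * |y| := by rw [← abs_mul]; exact le_abs_self _
    nlinarith [mul_nonneg (sub_nonneg.2 h) (abs_nonneg y), sq_nonneg y]
  · have t1 : |b| - |y| ≤ |b - y| := abs_sub_abs_le_abs_sub b y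
    have t2 : (0:ℝ) ≤ (|b - y| - τ) ^ 2 := sq_nonneg _
    have t3 : |b - y| ^ 2 = (b - y) ^ 2 := sq_abs _
    nlinarith [mul_le_mul_of_nonneg_left t1 hτ.le]

lemma huber_eq_moreau {τ : ℝ} (hτ : 0 < τ) (a : ℝ) :
    huberLoss τ a = (hclamp τ a) ^ 2 / 2 + τ * |a - hclamp τ a| := by
  unfold huberLoss hclamp
  rcases le_or_gt (|a|) τ with h | h
  · rw [if_pos h]
    rw [abs_le] at h
    rw [min_eq_left h.2, max_eq_right h.1]
    simp
  · rw [if_neg (not_le.2 h)]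
    rcases abs_cases a with ⟨ha1, ha2⟩ | ⟨ha1, ha2⟩ <;> rw [ha1] at h ⊢
    · rw [min_eq_right h.le, max_eq_right (by linarith), abs_of_nonneg (by linarith)]
      ring
    · rw [min_eq_left (by linarith), max_eq_left (by linarith), abs_of_nonpos (by linarith)]
      ring

lemma huber_smooth {τ : ℝ} (hτ : 0 < τ) (a b : ℝ) :
    huberLoss τ b ≤ huberLoss τ a + hclamp τ a * (b - a) + (b - a) ^ 2 / 2 := by
  have h1 := huber_moreau_le hτ b (a - hclamp τ a)
  have h2 := huber_eq_moreau hτ a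
  nlinarith [h1, h2]

lemma huber_lb {τ : ℝ} (hτ : 0 < τ) (b : ℝ) : τ * |b| - τ ^ 2 / 2 ≤ huberLoss τ b := by
  unfold huberLoss
  split_ifs with h
  · nlinarith [sq_nonneg (|b| - τ), sq_abs b]
  · exact le_refl _

lemma huber_nonneg {τ : ℝ} (hτ : 0 < τ) (b : ℝ) : 0 ≤ huberLoss τ b := by
  unfold huberLoss
  split_ifs with h
  · positivity
  · push_neg at h
    nlinarith [abs_nonneg b]

lemma huber_tangent {τ : ℝ} (hτ : 0 < τ) (a b : ℝ) :
    huberLoss τ a + hclamp τ a * (b - a) ≤ huberLoss τ b := by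
  rcases le_or_gt (|a|) τ with h | h
  · have hc : hclamp τ a = a := by
      rw [abs_le] at h; unfold hclamp; rw [min_eq_left h.2, max_eq_right h.1]
    have ha : huberLoss τ a = a ^ 2 / 2 := by unfold huberLoss; rw [if_pos h]
    rw [hc, ha]
    unfold huberLoss
    split_ifs with h2
    · nlinarith [sq_nonneg (a - b)]
    · push_neg at h2
      rcases abs_cases b with ⟨hb1, hb2⟩ | ⟨hb1, hb2⟩ <;> rw [hb1] at h2 ⊢ <;>
        rw [abs_le] at h <;> nlinarith [sq_nonneg (a - τ), sq_nonneg (a + τ)]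
  · rcases abs_cases a with ⟨ha1, ha2⟩ | ⟨ha1, ha2⟩ <;> rw [ha1] at h
    · have hc : hclamp τ a = τ := by
        unfold hclamp; rw [min_eq_right h.le, max_eq_right (by linarith)]
      have ha : huberLoss τ a = τ * a - τ ^ 2 / 2 := by
        unfold huberLoss; rw [if_neg (by rw [ha1]; exact not_le.2 h), ha1]
      rw [hc, ha]
      have h5 : τ * b ≤ τ * |b| := by nlinarith [le_abs_self b]
      nlinarith [huber_lb hτ b]
    · have hc : hclamp τ a = -τ := by
        unfold hclamp; rw [min_eq_left (by linarith), max_eq_left (by linarith)]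
      have ha : huberLoss τ a = -(τ * a) - τ ^ 2 / 2 := by
        unfold huberLoss; rw [if_neg (by rw [ha1]; exact not_le.2 h), ha1]; ring
      rw [hc, ha]
      have h5 : -(τ * b) ≤ τ * |b| := by nlinarith [neg_abs_le b]
      nlinarith [huber_lb hτ b]

/-- If `f_{0,τ} ∈ L²(P_X)` is a global minimizer of `f ↦ E[ℓ_τ(Y − f(X))]` over `L²(P_X)`,
with finite optimal risk, then for every `f ∈ L²(P_X)`,
`E[ℓ_τ(Y − f(X)) − ℓ_τ(Y − f_{0,τ}(X))] ≤ (1/2)·‖f − f_{0,τ}‖²_{L²(P_X)}`. -/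
theorem huber_population_excess_risk_bound
    {𝒳 Ω : Type*} [MeasurableSpace 𝒳] [MeasurableSpace Ω]
    (μ : Measure Ω) [IsProbabilityMeasure μ]
    (X : Ω → 𝒳) (hX : Measurable X) (Y : Ω → ℝ) (hY : Measurable Y)
    (τ : ℝ) (hτ : 0 < τ)
    (f0τ : 𝒳 → ℝ) (hf0τL2 : MemLp f0τ 2 (μ.map X))
    (hf0τInt : Integrable (fun ω => huberLoss τ (Y ω - f0τ (X ω))) μ)
    (hmin : ∀ g : 𝒳 → ℝ, MemLp g 2 (μ.map X) →
      (∫ ω, huberLoss τ (Y ω - f0τ (X ω)) ∂μ) ≤ ∫ ω, huberLoss τ (Y ω - g (X ω)) ∂μ)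
    (f : 𝒳 → ℝ) (hfL2 : MemLp f 2 (μ.map X)) :
    (∫ ω, (huberLoss τ (Y ω - f (X ω)) - huberLoss τ (Y ω - f0τ (X ω))) ∂μ) ≤
      (1 / 2) * ∫ x, (f x - f0τ x) ^ 2 ∂(μ.map X) := by
  -- notation
  set a : Ω → ℝ := fun ω => Y ω - f0τ (X ω) with ha_def
  set h : Ω → ℝ := fun ω => f (X ω) - f0τ (X ω) with hh_def
  set d : Ω → ℝ := fun ω => hclamp τ (a ω) with hd_def
  -- measurability
  have hf0X : AEStronglyMeasurable (fun ω => f0τ (X ω)) μ :=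
    hf0τL2.aestronglyMeasurable.comp_aemeasurable hX.aemeasurable
  have hfX : AEStronglyMeasurable (fun ω => f (X ω)) μ :=
    hfL2.aestronglyMeasurable.comp_aemeasurable hX.aemeasurable
  have ham : AEStronglyMeasurable a μ := hY.aestronglyMeasurable.sub hf0X
  have hhm : AEStronglyMeasurable h μ := hfX.sub hf0X
  have hdm : AEStronglyMeasurable d μ :=
    (continuous_hclamp τ).comp_aestronglyMeasurable ham
  -- L² and integrability facts
  have hhL2m : MemLp (fun x => f x - f0τ x) 2 (μ.map X) := hfL2.sub hf0τL2
  have hhL2 : MemLp h 2 μ := by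
    have := (memLp_map_measure_iff hhL2m.aestronglyMeasurable hX.aemeasurable).1 hhL2m
    exact this
  have hh_int : Integrable h μ := hhL2.integrable (by norm_num)
  have hhsq_int : Integrable (fun ω => h ω ^ 2) μ := hhL2.integrable_sq
  have hdh_int : Integrable (fun ω => d ω * h ω) μ := by
    refine Integrable.mono' (hh_int.abs.const_mul τ) (hdm.mul hhm) ?_
    filter_upwards with ω
    rw [Real.norm_eq_abs, abs_mul]
    exact mul_le_mul_of_nonneg_right (hclamp_abs_le hτ (a ω)) (abs_nonneg _)
  -- integrability of huberLoss (a + c h) for any c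
  have hint : ∀ c : ℝ, Integrable (fun ω => huberLoss τ (a ω + c * h ω)) μ := by
    intro c
    have hsm : AEStronglyMeasurable (fun ω => huberLoss τ (a ω + c * h ω)) μ :=
      ((measurable_huberLoss τ).comp_aemeasurable
        (ham.aemeasurable.add (hhm.aemeasurable.const_mul c))).aestronglyMeasurable
    have hG : Integrable (fun ω => huberLoss τ (a ω) + τ * |c| * |h ω|
        + c ^ 2 / 2 * h ω ^ 2) μ :=
      (hf0τInt.add (hh_int.abs.const_mul (τ * |c|))).add (hhsq_int.const_mul (c ^ 2 / 2))
    refine Integrable.mono' hG hsm ?_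
    filter_upwards with ω
    have habs : |d ω * (c * h ω)| ≤ τ * |c| * |h ω| := by
      rw [abs_mul, abs_mul, mul_assoc]
      exact mul_le_mul_of_nonneg_right (hclamp_abs_le hτ (a ω))
        (mul_nonneg (abs_nonneg _) (abs_nonneg _))
    have ht : huberLoss τ (a ω) + d ω * (c * h ω) ≤ huberLoss τ (a ω + c * h ω) := by
      simpa using huber_tangent hτ (a ω) (a ω + c * h ω)
    have hs : huberLoss τ (a ω + c * h ω) ≤
        huberLoss τ (a ω) + d ω * (c * h ω) + (c * h ω) ^ 2 / 2 := by
      simpa using huber_smooth hτ (a ω) (a ω + c * h ω)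
    have h2 : (c * h ω) ^ 2 = c ^ 2 * h ω ^ 2 := by ring
    have hnn := huber_nonneg hτ (a ω)
    have habs1 := abs_le.1 habs
    rw [Real.norm_eq_abs, abs_le]
    constructor
    · nlinarith [sq_nonneg (h ω), sq_nonneg c]
    · show huberLoss τ (a ω + c * h ω) ≤ huberLoss τ (a ω) + τ * |c| * |h ω| + c ^ 2 / 2 * h ω ^ 2
      have h3 : c ^ 2 / 2 * h ω ^ 2 = (c * h ω) ^ 2 / 2 := by ring
      calc huberLoss τ (a ω + c * h ω)
          ≤ huberLoss τ (a ω) + d ω * (c * h ω) + (c * h ω) ^ 2 / 2 := hs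
        _ ≤ huberLoss τ (a ω) + τ * |c| * |h ω| + (c * h ω) ^ 2 / 2 :=
            add_le_add_left (add_le_add_right habs1.2 _) _
        _ = huberLoss τ (a ω) + τ * |c| * |h ω| + c ^ 2 / 2 * h ω ^ 2 := by rw [h3]
  -- the integral inequality from smoothness, for each c
  have hB : ∀ c : ℝ, (∫ ω, huberLoss τ (a ω + c * h ω) ∂μ) ≤
      (∫ ω, huberLoss τ (a ω) ∂μ) + c * (∫ ω, d ω * h ω ∂μ)
        + c ^ 2 / 2 * (∫ ω, h ω ^ 2 ∂μ) := by
    intro c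
    have i1 : Integrable (fun ω => c * (d ω * h ω)) μ := hdh_int.const_mul c
    have i2 : Integrable (fun ω => c ^ 2 / 2 * h ω ^ 2) μ := hhsq_int.const_mul (c ^ 2 / 2)
    have i3 : Integrable (fun ω => huberLoss τ (a ω) + c * (d ω * h ω)) μ := hf0τInt.add i1
    have i4 : Integrable (fun ω => (huberLoss τ (a ω) + c * (d ω * h ω))
        + c ^ 2 / 2 * h ω ^ 2) μ := i3.add i2
    have hmono := integral_mono (hint c) i4 (fun ω => by
      have hs := huber_smooth hτ (a ω) (a ω + c * h ω)
      simp only [add_sub_cancel_left] at hs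
      nlinarith [hs])
    rw [integral_add i3 i2, integral_add hf0τInt i1, integral_const_mul,
      integral_const_mul] at hmono
    linarith
  -- minimality applied to f0 + t (f - f0) : gives bound on D := ∫ d h
  set D : ℝ := ∫ ω, d ω * h ω ∂μ with hD_def
  set C : ℝ := ∫ ω, h ω ^ 2 ∂μ with hC_def
  have hC_nonneg : 0 ≤ C := integral_nonneg (fun ω => sq_nonneg _)
  have hD_bound : ∀ t : ℝ, 0 < t → t ≤ 1 → -(t / 2) * C ≤ D := by
    intro t ht ht1
    have hgL2 : MemLp (fun x => f0τ x - t * (f x - f0τ x)) 2 (μ.map X) :=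
      hf0τL2.sub (hhL2m.const_mul t)
    have hmin' := hmin _ hgL2
    have heq : (fun ω => huberLoss τ (Y ω - (f0τ (X ω) - t * (f (X ω) - f0τ (X ω)))))
        = fun ω => huberLoss τ (a ω + t * h ω) := by
      funext ω
      have h1 : Y ω - (f0τ (X ω) - t * (f (X ω) - f0τ (X ω))) = a ω + t * h ω := by
        simp only [ha_def, hh_def]; ring
      rw [h1]
    rw [heq] at hmin'
    have hBt := hB t
    nlinarith [hmin', hBt]
  -- final bound for each t, then let t → 0
  have hLHS_eq : (∫ ω, (huberLoss τ (Y ω - f (X ω)) - huberLoss τ (Y ω - f0τ (X ω))) ∂μ)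
      = (∫ ω, huberLoss τ (a ω + (-1) * h ω) ∂μ) - (∫ ω, huberLoss τ (a ω) ∂μ) := by
    have heq : (fun ω => huberLoss τ (Y ω - f (X ω)) - huberLoss τ (Y ω - f0τ (X ω)))
        = fun ω => huberLoss τ (a ω + (-1) * h ω) - huberLoss τ (a ω) := by
      funext ω
      have h1 : Y ω - f (X ω) = a ω + (-1) * h ω := by simp only [ha_def, hh_def]; ring
      rw [h1]
    rw [heq]
    exact integral_sub (hint (-1)) hf0τInt
  have hRHS_eq : (∫ x, (f x - f0τ x) ^ 2 ∂(μ.map X)) = C := by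
    have hsm : AEStronglyMeasurable (fun x => (f x - f0τ x) ^ 2) (μ.map X) :=
      (hhL2m.aestronglyMeasurable.aemeasurable.pow_const 2).aestronglyMeasurable
    rw [hC_def, integral_map hX.aemeasurable hsm]
  rw [hLHS_eq, hRHS_eq]
  have hmain : ∀ t : ℝ, 0 < t → t ≤ 1 →
      (∫ ω, huberLoss τ (a ω + (-1) * h ω) ∂μ) - (∫ ω, huberLoss τ (a ω) ∂μ)
        ≤ 1 / 2 * C + t / 2 * C := by
    intro t ht ht1
    have hB1 := hB (-1)
    have he : ((-1 : ℝ)) ^ 2 / 2 = 1 / 2 := by norm_num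
    rw [he] at hB1
    have hD := hD_bound t ht ht1
    nlinarith [hB1, hD]
  refine le_of_forall_pos_le_add ?_
  intro ε hε
  rcases eq_or_lt_of_le hC_nonneg with hC0 | hC0
  · have := hmain 1 one_pos le_rfl
    rw [← hC0] at this ⊢
    linarith
  · set t : ℝ := min 1 (ε / C) with ht_def
    have ht : 0 < t := lt_min one_pos (div_pos hε hC0)
    have ht1 : t ≤ 1 := min_le_left _ _
    have := hmain t ht ht1
    have htε : t / 2 * C ≤ ε := by
      have : t ≤ ε / C := min_le_right _ _
      have := mul_le_mul_of_nonneg_right this hC_nonneg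
      rw [div_mul_cancel₀] at this
      · linarith
      · exact ne_of_gt hC0
    linarith
end

section
/- Let m > a ≥ 0, n ≥ 0, L > 0, and let X be an ℝ^d-valued random vector with E[‖X‖₂^m] < ∞. Then there exists a constant C > 0, depending only on m, a, n, L and E[‖X‖₂^m], such that every measurable function f : ℝ^d → ℝ with 0 ≤ f(x) ≤ L·⟨x⟩^a for all x satisfies E[ f(X)·⟨X⟩^{−n} ] ≥ C·min( E[f(X)], E[f(X)]^{1 + n/(m−a)} ). -/
open MeasureTheory

/-- Let `m > a ≥ 0`, `n ≥ 0`, `L > 0`, and let `X` be an `ℝ^d`-valued random vector with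
`E‖X‖₂^m < ∞`. Then there is a constant `C > 0` such that every measurable `f` with
`0 ≤ f(x) ≤ L⟨x⟩^a` satisfies `E[f(X)⟨X⟩^{−n}] ≥ C·min(E[f(X)], E[f(X)]^{1+n/(m−a)})`,
where `⟨x⟩ = 1 + ‖x‖₂`. -/
theorem expectation_polynomial_weight_lower_bound
    {d : ℕ} {Ω : Type*} [MeasurableSpace Ω]
    (μ : Measure Ω) [IsProbabilityMeasure μ]
    (m a n L : ℝ) (hma : a < m) (ha : 0 ≤ a) (hn : 0 ≤ n) (hL : 0 < L)
    (X : Ω → EuclideanSpace ℝ (Fin d)) (hXmeas : Measurable X)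
    (hmom : Integrable (fun ω => ‖X ω‖ ^ m) μ) :
    ∃ C : ℝ, 0 < C ∧ ∀ f : EuclideanSpace ℝ (Fin d) → ℝ, Measurable f →
      (∀ x, 0 ≤ f x ∧ f x ≤ L * (1 + ‖x‖) ^ a) →
      C * min (∫ ω, f (X ω) ∂μ) ((∫ ω, f (X ω) ∂μ) ^ (1 + n / (m - a))) ≤
        ∫ ω, f (X ω) * (1 + ‖X ω‖) ^ (-n) ∂μ := by
  classical
  have hm0 : 0 ≤ m := le_trans ha hma.le
  have hmam : 0 < m - a := by linarith
  set g : Ω → ℝ := fun ω => 1 + ‖X ω‖ with hg_def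
  have hg_meas : Measurable g := measurable_const.add hXmeas.norm
  have hg1 : ∀ ω, 1 ≤ g ω := fun ω => le_add_of_nonneg_right (norm_nonneg _)
  have hg0 : ∀ ω, 0 < g ω := fun ω => lt_of_lt_of_le one_pos (hg1 ω)
  have hgm_meas : Measurable fun ω => g ω ^ m := by
    have : Measurable fun ω => Real.rpow (g ω) m := by measurability
    exact this
  -- integrability of g^m
  have hgm_int : Integrable (fun ω => g ω ^ m) μ := by
    have hint : Integrable (fun ω => (2:ℝ) ^ m * (1 + ‖X ω‖ ^ m)) μ :=
      ((integrable_const (1:ℝ)).add hmom).const_mul _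
    refine hint.mono hgm_meas.aestronglyMeasurable (Filter.Eventually.of_forall fun ω => ?_)
    have ht : (0:ℝ) ≤ ‖X ω‖ := norm_nonneg _
    have h1 : g ω ≤ 2 * max 1 ‖X ω‖ := by
      have := le_max_left (1:ℝ) ‖X ω‖
      have := le_max_right (1:ℝ) ‖X ω‖
      simp only [hg_def]; linarith
    have h2 : g ω ^ m ≤ (2 * max 1 ‖X ω‖) ^ m :=
      Real.rpow_le_rpow (hg0 ω).le h1 hm0
    have h3 : (2 * max 1 ‖X ω‖) ^ m = 2 ^ m * (max 1 ‖X ω‖) ^ m :=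
      Real.mul_rpow (by norm_num) (le_trans zero_le_one (le_max_left _ _))
    have h4 : (max 1 ‖X ω‖) ^ m ≤ 1 + ‖X ω‖ ^ m := by
      rcases le_total ‖X ω‖ 1 with h | h
      · rw [max_eq_left h, Real.one_rpow]
        have : (0:ℝ) ≤ ‖X ω‖ ^ m := Real.rpow_nonneg ht m
        linarith
      · rw [max_eq_right h]
        have : (0:ℝ) ≤ ‖X ω‖ ^ m := Real.rpow_nonneg ht m
        linarith
    have hgm_nonneg : (0:ℝ) ≤ g ω ^ m := Real.rpow_nonneg (hg0 ω).le m
    have h2m : (0:ℝ) ≤ (2:ℝ) ^ m := Real.rpow_nonneg (by norm_num) m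
    rw [Real.norm_eq_abs, Real.norm_eq_abs, abs_of_nonneg hgm_nonneg]
    have : g ω ^ m ≤ 2 ^ m * (1 + ‖X ω‖ ^ m) := by
      calc g ω ^ m ≤ 2 ^ m * (max 1 ‖X ω‖) ^ m := by rw [← h3]; exact h2
        _ ≤ 2 ^ m * (1 + ‖X ω‖ ^ m) := mul_le_mul_of_nonneg_left h4 h2m
    exact this.trans (le_abs_self _)
  set M : ℝ := ∫ ω, g ω ^ m ∂μ with hM_def
  have hM1 : 1 ≤ M := by
    have : ∫ ω, (1:ℝ) ∂μ ≤ M :=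
      integral_mono (integrable_const 1) hgm_int (fun ω => by
        have := Real.rpow_le_rpow zero_le_one (hg1 ω) hm0
        rwa [Real.one_rpow] at this)
    simpa using this
  have hM0 : 0 < M := lt_of_lt_of_le one_pos hM1
  set K : ℝ := 2 * L * M with hK_def
  have hK0 : 0 < K := by positivity
  set q : ℝ := n / (m - a) with hq_def
  have hq0 : 0 ≤ q := div_nonneg hn hmam.le
  refine ⟨(1/2) * K ^ (-q), by positivity, fun f hf hfb => ?_⟩
  set F : Ω → ℝ := fun ω => f (X ω) with hF_def
  have hF_meas : Measurable F := hf.comp hXmeas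
  have hF0 : ∀ ω, 0 ≤ F ω := fun ω => (hfb (X ω)).1
  have hFb : ∀ ω, F ω ≤ L * g ω ^ a := fun ω => (hfb (X ω)).2
  have hga_le_gm : ∀ ω, g ω ^ a ≤ g ω ^ m := fun ω =>
    Real.rpow_le_rpow_of_exponent_le (hg1 ω) hma.le
  have hF_le : ∀ ω, F ω ≤ L * g ω ^ m := fun ω =>
    (hFb ω).trans (mul_le_mul_of_nonneg_left (hga_le_gm ω) hL.le)
  have hF_int : Integrable F μ := by
    refine (hgm_int.const_mul L).mono hF_meas.aestronglyMeasurable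
      (Filter.Eventually.of_forall fun ω => ?_)
    rw [Real.norm_eq_abs, abs_of_nonneg (hF0 ω)]
    exact (hF_le ω).trans (le_abs_self _)
  -- the weighted integrand
  set G : Ω → ℝ := fun ω => F ω * g ω ^ (-n) with hG_def
  have hGn_le_one : ∀ ω, g ω ^ (-n) ≤ 1 := fun ω => by
    have := Real.rpow_le_rpow_of_exponent_le (hg1 ω) (neg_nonpos.mpr hn : -n ≤ 0)
    rwa [Real.rpow_zero] at this
  have hGn_nonneg : ∀ ω, (0:ℝ) ≤ g ω ^ (-n) := fun ω => Real.rpow_nonneg (hg0 ω).le _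
  have hG0 : ∀ ω, 0 ≤ G ω := fun ω => mul_nonneg (hF0 ω) (hGn_nonneg ω)
  have hG_le_F : ∀ ω, G ω ≤ F ω := fun ω => by
    have := mul_le_mul_of_nonneg_left (hGn_le_one ω) (hF0 ω)
    simpa using this
  have hG_meas : Measurable G := by
    have : Measurable fun ω => Real.rpow (g ω) (-n) := by measurability
    exact hF_meas.mul this
  have hG_int : Integrable G μ := by
    refine hF_int.mono hG_meas.aestronglyMeasurable
      (Filter.Eventually.of_forall fun ω => ?_)
    rw [Real.norm_eq_abs, abs_of_nonneg (hG0 ω)]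
    exact (hG_le_F ω).trans (le_abs_self _)
  set I : ℝ := ∫ ω, F ω ∂μ with hI_def
  have hI0 : 0 ≤ I := integral_nonneg hF0
  have hintG0 : 0 ≤ ∫ ω, G ω ∂μ := integral_nonneg hG0
  rcases eq_or_lt_of_le hI0 with hI | hI
  · -- I = 0 case
    rw [← hI]
    have hθ : (1 + q) ≠ 0 := by positivity
    rw [Real.zero_rpow hθ, min_self, mul_zero]
    exact hintG0
  -- now 0 < I
  have hIK : I ≤ K := by
    have h1 : I ≤ ∫ ω, L * g ω ^ m ∂μ :=
      integral_mono hF_int (hgm_int.const_mul L) hF_le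
    rw [integral_const_mul _ _] at h1
    have : L * M ≤ 2 * L * M := by nlinarith
    linarith
  set B : ℝ := (K / I) ^ (m - a)⁻¹ with hB_def
  have hKI1 : 1 ≤ K / I := (one_le_div hI).2 hIK
  have hKI0 : 0 < K / I := lt_of_lt_of_le one_pos hKI1
  have hB1 : 1 ≤ B := by
    have := Real.rpow_le_rpow zero_le_one hKI1 (inv_nonneg.mpr hmam.le)
    rwa [Real.one_rpow] at this
  have hB0 : 0 < B := lt_of_lt_of_le one_pos hB1
  have hBma : B ^ (m - a) = K / I :=
    Real.rpow_inv_rpow hKI0.le (ne_of_gt hmam)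
  have hBam : B ^ (a - m) = I / K := by
    have : B ^ (a - m) = (B ^ (m - a))⁻¹ := by
      rw [show a - m = -(m - a) by ring, Real.rpow_neg hB0.le]
    rw [this, hBma, inv_div]
  set S : Set Ω := {ω | g ω ≤ B} with hS_def
  have hS_meas : MeasurableSet S := measurableSet_le hg_meas measurable_const
  -- tail bound
  have htail : ∫ ω in Sᶜ, F ω ∂μ ≤ I / 2 := by
    have step1 : ∫ ω in Sᶜ, F ω ∂μ ≤ ∫ ω in Sᶜ, (L * B ^ (a - m)) * g ω ^ m ∂μ := by
      refine setIntegral_mono_on hF_int.integrableOn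
        ((hgm_int.const_mul _).integrableOn) hS_meas.compl (fun ω hω => ?_)
      have hωB : B < g ω := by
        simpa [hS_def] using hω
      have h1 : g ω ^ (a - m) ≤ B ^ (a - m) :=
        Real.rpow_le_rpow_of_nonpos hB0 hωB.le (by linarith)
      have h2 : g ω ^ a = g ω ^ m * g ω ^ (a - m) := by
        rw [← Real.rpow_add (hg0 ω)]; ring_nf
      have h3 : g ω ^ a ≤ g ω ^ m * B ^ (a - m) := by
        rw [h2]
        exact mul_le_mul_of_nonneg_left h1 (Real.rpow_nonneg (hg0 ω).le m)
      calc F ω ≤ L * g ω ^ a := hFb ω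
        _ ≤ L * (g ω ^ m * B ^ (a - m)) := mul_le_mul_of_nonneg_left h3 hL.le
        _ = (L * B ^ (a - m)) * g ω ^ m := by ring
    have step2 : ∫ ω in Sᶜ, (L * B ^ (a - m)) * g ω ^ m ∂μ ≤ (L * B ^ (a - m)) * M := by
      rw [integral_const_mul _ _]
      have hc : 0 ≤ L * B ^ (a - m) :=
        mul_nonneg hL.le (Real.rpow_nonneg hB0.le _)
      refine mul_le_mul_of_nonneg_left ?_ hc
      exact setIntegral_le_integral hgm_int
        (Filter.Eventually.of_forall fun ω => Real.rpow_nonneg (hg0 ω).le m)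
    have heq : (L * B ^ (a - m)) * M = I / 2 := by
      rw [hBam, hK_def]
      field_simp
    linarith
  have hSF : I / 2 ≤ ∫ ω in S, F ω ∂μ := by
    have := integral_add_compl hS_meas hF_int (f := F)
    rw [← hI_def] at this
    linarith
  -- main chain
  have hmain : B ^ (-n) * (I / 2) ≤ ∫ ω, G ω ∂μ := by
    have hBn0 : 0 ≤ B ^ (-n) := Real.rpow_nonneg hB0.le _
    have h1 : B ^ (-n) * (I / 2) ≤ B ^ (-n) * ∫ ω in S, F ω ∂μ :=
      mul_le_mul_of_nonneg_left hSF hBn0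
    have h2 : B ^ (-n) * ∫ ω in S, F ω ∂μ ≤ ∫ ω in S, G ω ∂μ := by
      rw [← integral_const_mul _ _]
      refine setIntegral_mono_on ((hF_int.const_mul _).integrableOn)
        hG_int.integrableOn hS_meas (fun ω hω => ?_)
      have hωB : g ω ≤ B := hω
      have : B ^ (-n) ≤ g ω ^ (-n) :=
        Real.rpow_le_rpow_of_nonpos (hg0 ω) hωB (neg_nonpos.mpr hn)
      calc B ^ (-n) * F ω ≤ g ω ^ (-n) * F ω :=
            mul_le_mul_of_nonneg_right this (hF0 ω)
        _ = G ω := by rw [hG_def]; ring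
    have h3 : ∫ ω in S, G ω ∂μ ≤ ∫ ω, G ω ∂μ :=
      setIntegral_le_integral hG_int (Filter.Eventually.of_forall hG0)
    linarith
  -- compute B^{-n} * (I/2) = (1/2) * K^{-q} * I^{1+q}
  have hcalc : B ^ (-n) * (I / 2) = (1/2) * K ^ (-q) * I ^ (1 + q) := by
    have h1 : B ^ (-n) = (K / I) ^ (-q) := by
      rw [hB_def, ← Real.rpow_mul hKI0.le]
      congr 1
      rw [hq_def]
      field_simp
    have h2 : (K / I) ^ (-q) = K ^ (-q) * I ^ q := by
      rw [Real.rpow_neg hKI0.le, Real.div_rpow hK0.le hI.le, inv_div,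
        Real.rpow_neg hK0.le]
      ring
    have h3 : I ^ q * I = I ^ (1 + q) := by
      nth_rewrite 2 [← Real.rpow_one I]
      rw [← Real.rpow_add hI]
      ring_nf
    rw [h1, h2]
    rw [show K ^ (-q) * I ^ q * (I / 2) = (1/2) * K ^ (-q) * (I ^ q * I) by ring, h3]
  -- conclude
  have hmin : min I (I ^ (1 + q)) ≤ I ^ (1 + q) := min_le_right _ _
  have hCpos : (0:ℝ) ≤ (1/2) * K ^ (-q) := by positivity
  calc (1/2) * K ^ (-q) * min I (I ^ (1 + q))
      ≤ (1/2) * K ^ (-q) * I ^ (1 + q) := mul_le_mul_of_nonneg_left hmin hCpos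
    _ = B ^ (-n) * (I / 2) := by rw [hcalc]
    _ ≤ ∫ ω, G ω ∂μ := hmain
end
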